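/- arXiv:1708.01966 — 6 statements merged into one kernel-verified Lean document; each statement's English description precedes it below -/
import Mathlib

section
/- Let H be a real Hilbert space, T > 0, M ≥ 2 an integer, Δt = T/M and t_m = mΔt, and let f : [0,T] → H be twice continuously differentiable. Then Δt · Σ_{m=1}^{M−1} ‖( f(t_{m+1}) − 2 f(t_m) + f(t_{m−1}) ) / Δt² ‖² ≤ (4/3) ∫₀^T ‖f''(t)‖² dt. -/
open MeasureTheory Set intervalIntegral

lemma cs_interval {H : Type*} [NormedAddCommGroup H] [NormedSpace ℝ H]
    {a b : ℝ} (hab : a ≤ b) {w : ℝ → ℝ} {g : ℝ → H}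
    (hw : ContinuousOn w (Icc a b)) (hg : ContinuousOn g (Icc a b)) :
    ‖∫ τ in a..b, w τ • g τ‖ ^ 2 ≤ (∫ τ in a..b, (w τ) ^ 2) * (∫ τ in a..b, ‖g τ‖ ^ 2) := by
  set μ := volume.restrict (Ioc a b) with hμ
  have hwm : AEStronglyMeasurable w μ :=
    (hw.mono Ioc_subset_Icc_self).aestronglyMeasurable measurableSet_Ioc
  have hgm : AEStronglyMeasurable g μ :=
    (hg.mono Ioc_subset_Icc_self).aestronglyMeasurable measurableSet_Ioc
  have hw2 : Integrable (fun τ => w τ ^ 2) μ :=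
    ((hw.pow 2).integrableOn_Icc).mono_set Ioc_subset_Icc_self
  have hg2 : Integrable (fun τ => ‖g τ‖ ^ 2) μ :=
    ((hg.norm.pow 2).integrableOn_Icc).mono_set Ioc_subset_Icc_self
  have hwLp : MemLp w (ENNReal.ofReal 2) μ := by
    rw [show (ENNReal.ofReal 2) = 2 by norm_num]
    exact (memLp_two_iff_integrable_sq hwm).2 hw2
  have hgLp : MemLp (fun τ => ‖g τ‖) (ENNReal.ofReal 2) μ := by
    rw [show (ENNReal.ofReal 2) = 2 by norm_num]
    exact (memLp_two_iff_integrable_sq hgm.norm).2 hg2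
  have hconj : Real.HolderConjugate 2 2 := Real.holderConjugate_iff.mpr ⟨one_lt_two, by norm_num⟩
  have key := integral_mul_norm_le_Lp_mul_Lq (μ := μ) hconj hwLp hgLp
  have hA0 : 0 ≤ ∫ τ in a..b, (w τ) ^ 2 :=
    intervalIntegral.integral_nonneg hab (fun x _ => sq_nonneg _)
  have hB0 : 0 ≤ ∫ τ in a..b, ‖g τ‖ ^ 2 :=
    intervalIntegral.integral_nonneg hab (fun x _ => sq_nonneg _)
  have eA : ∫ τ, ‖w τ‖ ^ (2:ℝ) ∂μ = ∫ τ in a..b, (w τ) ^ 2 := by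
    rw [intervalIntegral.integral_of_le hab]
    congr 1; funext τ
    rw [Real.rpow_two, Real.norm_eq_abs, sq_abs]
  have eB : ∫ τ, ‖(fun τ => ‖g τ‖) τ‖ ^ (2:ℝ) ∂μ = ∫ τ in a..b, ‖g τ‖ ^ 2 := by
    rw [intervalIntegral.integral_of_le hab]
    congr 1; funext τ
    rw [Real.rpow_two, norm_norm]
  rw [eA, eB] at key
  have h1 : ‖∫ τ in a..b, w τ • g τ‖ ≤ ∫ τ in a..b, ‖w τ • g τ‖ :=
    intervalIntegral.norm_integral_le_integral_norm hab
  have h2 : ∫ τ in a..b, ‖w τ • g τ‖ = ∫ τ, ‖w τ‖ * ‖(fun τ => ‖g τ‖) τ‖ ∂μ := by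
    rw [intervalIntegral.integral_of_le hab]
    congr 1; funext τ; rw [norm_smul, ← norm_norm (g τ)]
  have h3 : ‖∫ τ in a..b, w τ • g τ‖ ≤
      (∫ τ in a..b, (w τ) ^ 2) ^ ((1:ℝ)/2) * (∫ τ in a..b, ‖g τ‖ ^ 2) ^ ((1:ℝ)/2) := by
    calc ‖∫ τ in a..b, w τ • g τ‖ ≤ ∫ τ, ‖w τ‖ * ‖(fun τ => ‖g τ‖) τ‖ ∂μ := h2 ▸ h1
    _ ≤ _ := key
  calc ‖∫ τ in a..b, w τ • g τ‖ ^ 2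
      ≤ ((∫ τ in a..b, (w τ) ^ 2) ^ ((1:ℝ)/2) * (∫ τ in a..b, ‖g τ‖ ^ 2) ^ ((1:ℝ)/2)) ^ 2 :=
        pow_le_pow_left₀ (norm_nonneg _) h3 2
    _ = (∫ τ in a..b, (w τ) ^ 2) * (∫ τ in a..b, ‖g τ‖ ^ 2) := by
        rw [mul_pow, ← Real.rpow_natCast (_ ^ ((1:ℝ)/2)) 2, ← Real.rpow_natCast (_ ^ ((1:ℝ)/2)) 2,
          ← Real.rpow_mul hA0, ← Real.rpow_mul hB0]
        norm_num

lemma taylor1 {H : Type*} [NormedAddCommGroup H] [NormedSpace ℝ H] [CompleteSpace H]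
    {T : ℝ} {f f' f'' : ℝ → H}
    (hf : ∀ s ∈ Set.Icc (0 : ℝ) T, HasDerivWithinAt f (f' s) (Set.Icc 0 T) s)
    (hf' : ∀ s ∈ Set.Icc (0 : ℝ) T, HasDerivWithinAt f' (f'' s) (Set.Icc 0 T) s)
    (hf'' : ContinuousOn f'' (Set.Icc 0 T))
    {t s : ℝ} (ht : t ∈ Set.Icc (0 : ℝ) T) (hs : s ∈ Set.Icc (0 : ℝ) T) :
    f s - f t - (s - t) • f' t = ∫ τ in t..s, (s - τ) • f'' τ := by
  set G : ℝ → H := fun τ => f τ + (s - τ) • f' τ with hG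
  have hGd : ∀ x ∈ Set.Icc (0 : ℝ) T, HasDerivWithinAt G ((s - x) • f'' x) (Set.Icc 0 T) x := by
    intro x hx
    have hc : HasDerivWithinAt (fun τ : ℝ => s - τ) (-1) (Set.Icc 0 T) x :=
      ((hasDerivWithinAt_id x _).const_sub s)
    have h2 := hc.smul (hf' x hx)
    have := (hf x hx).add h2
    convert this using 1
    · rfl
    · module
  have hsub : uIcc t s ⊆ Set.Icc (0 : ℝ) T := by
    rw [Set.uIcc_eq_union]
    exact Set.union_subset (Set.Icc_subset_Icc ht.1 hs.2) (Set.Icc_subset_Icc hs.1 ht.2)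
  have hGc : ContinuousOn G (uIcc t s) :=
    fun x hx => ((hGd x (hsub hx)).continuousWithinAt).mono hsub
  have hint : IntervalIntegrable (fun τ => (s - τ) • f'' τ) volume t s := by
    apply ContinuousOn.intervalIntegrable
    exact (continuousOn_const.sub continuousOn_id).smul (hf''.mono hsub)
  have hderiv : ∀ x ∈ Set.Ioo (min t s) (max t s),
      HasDerivWithinAt G ((s - x) • f'' x) (Set.Ioi x) x := by
    intro x hx
    have hx01 : x ∈ Set.Ioo (0 : ℝ) T :=
      ⟨lt_of_le_of_lt (le_min ht.1 hs.1) hx.1, lt_of_lt_of_le hx.2 (max_le ht.2 hs.2)⟩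
    have hmem : Set.Icc (0 : ℝ) T ∈ nhds x := Icc_mem_nhds hx01.1 hx01.2
    exact ((hGd x (Set.Ioo_subset_Icc_self hx01)).hasDerivAt hmem).hasDerivWithinAt
  have := intervalIntegral.integral_eq_sub_of_hasDeriv_right hGc hderiv hint
  rw [this, hG]
  simp only [sub_self, zero_smul, add_zero]
  abel

lemma int_sq_right (a b : ℝ) : ∫ τ in a..b, (τ - a) ^ 2 = (b - a) ^ 3 / 3 := by
  rw [intervalIntegral.integral_comp_sub_right (fun x => x ^ 2) a]
  simp [integral_pow]; norm_num

lemma int_sq_left (b c : ℝ) : ∫ τ in b..c, (c - τ) ^ 2 = (c - b) ^ 3 / 3 := by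
  rw [intervalIntegral.integral_comp_sub_left (fun x => x ^ 2) c]
  simp [integral_pow]; norm_num

/-- Discrete estimate from Lemma 3.4 of the paper: with `Δt = T/M` and `t_m = mΔt`,
`Δt Σ_{m=1}^{M−1} ‖(f(t_{m+1}) − 2f(t_m) + f(t_{m−1}))/Δt²‖² ≤ (4/3) ∫₀^T ‖f''‖²`. -/
theorem stmt8 {H : Type*} [NormedAddCommGroup H] [InnerProductSpace ℝ H] [CompleteSpace H]
    (T : ℝ) (hT : 0 < T) (M : ℕ) (hM : 2 ≤ M)
    (f f' f'' : ℝ → H)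
    (hf : ∀ s ∈ Set.Icc (0 : ℝ) T, HasDerivWithinAt f (f' s) (Set.Icc 0 T) s)
    (hf' : ∀ s ∈ Set.Icc (0 : ℝ) T, HasDerivWithinAt f' (f'' s) (Set.Icc 0 T) s)
    (hf'' : ContinuousOn f'' (Set.Icc 0 T)) :
    (T / M) * ∑ m ∈ Finset.Icc 1 (M - 1),
        ‖(((T / M) ^ 2)⁻¹ : ℝ) •
            (f (((m : ℝ) + 1) * (T / M)) - (2 : ℝ) • f ((m : ℝ) * (T / M))
              + f (((m : ℝ) - 1) * (T / M)))‖ ^ 2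
      ≤ (4 / 3) * ∫ s in (0 : ℝ)..T, ‖f'' s‖ ^ 2 := by
  have hM0 : (0 : ℝ) < M := by positivity
  set h := T / M with hh
  have hhpos : 0 < h := div_pos hT hM0
  have hMh : (M : ℝ) * h = T := by rw [hh]; field_simp
  have hFc : ContinuousOn (fun s => ‖f'' s‖ ^ 2) (Set.Icc 0 T) := hf''.norm.pow 2
  set J := ∫ s in (0:ℝ)..T, ‖f'' s‖ ^ 2 with hJ
  -- membership helper
  have hmem : ∀ x : ℝ, 0 ≤ x → x ≤ (M : ℝ) → x * h ∈ Set.Icc (0:ℝ) T := fun x hx hxM =>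
    ⟨mul_nonneg hx hhpos.le, by rw [← hMh]; exact mul_le_mul_of_nonneg_right hxM hhpos.le⟩
  have hsubIcc : ∀ u v : ℝ, u ∈ Set.Icc (0:ℝ) T → v ∈ Set.Icc (0:ℝ) T →
      uIcc u v ⊆ Set.Icc (0:ℝ) T := by
    intro u v hu hv
    rw [Set.uIcc_eq_union]
    exact Set.union_subset (Set.Icc_subset_Icc hu.1 hv.2) (Set.Icc_subset_Icc hv.1 hu.2)
  have hIntF : ∀ u v : ℝ, u ∈ Set.Icc (0:ℝ) T → v ∈ Set.Icc (0:ℝ) T →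
      IntervalIntegrable (fun s => ‖f'' s‖ ^ 2) volume u v := fun u v hu hv =>
    (hFc.mono (hsubIcc u v hu hv)).intervalIntegrable
  have hJmono : ∀ u v : ℝ, u ∈ Set.Icc (0:ℝ) T → v ∈ Set.Icc (0:ℝ) T → u ≤ v →
      (∫ τ in u..v, ‖f'' τ‖ ^ 2) ≤ J := by
    intro u v hu hv huv
    have h0T : (0:ℝ) ∈ Set.Icc (0:ℝ) T := ⟨le_refl _, hT.le⟩
    have hTT : T ∈ Set.Icc (0:ℝ) T := ⟨hT.le, le_refl _⟩
    have e1 : (∫ τ in u..v, ‖f'' τ‖ ^ 2) + ∫ τ in v..T, ‖f'' τ‖ ^ 2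
        = ∫ τ in u..T, ‖f'' τ‖ ^ 2 :=
      intervalIntegral.integral_add_adjacent_intervals (hIntF u v hu hv) (hIntF v T hv hTT)
    have e2 : (∫ τ in (0:ℝ)..u, ‖f'' τ‖ ^ 2) + ∫ τ in u..T, ‖f'' τ‖ ^ 2 = J :=
      intervalIntegral.integral_add_adjacent_intervals (hIntF 0 u h0T hu) (hIntF u T hu hTT)
    have n1 : 0 ≤ ∫ τ in v..T, ‖f'' τ‖ ^ 2 :=
      intervalIntegral.integral_nonneg hv.2 (fun x _ => sq_nonneg _)
    have n2 : 0 ≤ ∫ τ in (0:ℝ)..u, ‖f'' τ‖ ^ 2 :=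
      intervalIntegral.integral_nonneg hu.1 (fun x _ => sq_nonneg _)
    linarith
  -- per-term bound
  set A : ℕ → ℝ := fun m => ∫ τ in (((m:ℝ) - 1) * h)..((m:ℝ) * h), ‖f'' τ‖ ^ 2 with hA
  set B : ℕ → ℝ := fun m => ∫ τ in ((m:ℝ) * h)..(((m:ℝ) + 1) * h), ‖f'' τ‖ ^ 2 with hB
  have hterm : ∀ m ∈ Finset.Icc 1 (M - 1),
      ‖((h ^ 2)⁻¹ : ℝ) • (f (((m:ℝ) + 1) * h) - (2:ℝ) • f ((m:ℝ) * h) + f (((m:ℝ) - 1) * h))‖ ^ 2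
        ≤ (2 / (3 * h)) * (A m + B m) := by
    intro m hm
    rw [Finset.mem_Icc] at hm
    have hm1 : (1:ℝ) ≤ (m:ℝ) := by exact_mod_cast hm.1
    have hmM : m + 1 ≤ M := by omega
    have hmM' : ((m:ℝ) + 1) ≤ (M:ℝ) := by exact_mod_cast hmM
    set a := ((m:ℝ) - 1) * h with ha'
    set b := ((m:ℝ)) * h with hb'
    set c := ((m:ℝ) + 1) * h with hc'
    have ha : a ∈ Set.Icc (0:ℝ) T := hmem _ (by linarith) (by linarith)
    have hb : b ∈ Set.Icc (0:ℝ) T := hmem _ (by linarith) (by linarith)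
    have hc : c ∈ Set.Icc (0:ℝ) T := hmem _ (by linarith) (by linarith)
    have hba : b - a = h := by rw [ha', hb']; ring
    have hcb : c - b = h := by rw [hb', hc']; ring
    have hab : a ≤ b := by linarith
    have hbc : b ≤ c := by linarith
    -- identity
    have e1 : f c - f b - (c - b) • f' b = ∫ τ in b..c, (c - τ) • f'' τ :=
      taylor1 hf hf' hf'' hb hc
    have e2 : f a - f b - (a - b) • f' b = ∫ τ in b..a, (a - τ) • f'' τ :=
      taylor1 hf hf' hf'' hb ha
    have e2' : (∫ τ in b..a, (a - τ) • f'' τ) = ∫ τ in a..b, (τ - a) • f'' τ := by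
      rw [intervalIntegral.integral_symm, ← intervalIntegral.integral_neg]
      congr 1; funext τ; rw [← neg_smul, neg_sub]
    set X := ∫ τ in a..b, (τ - a) • f'' τ with hX'
    set Y := ∫ τ in b..c, (c - τ) • f'' τ with hY'
    have hD : f c - (2:ℝ) • f b + f a = X + Y := by
      have e2'' : f a - f b - (a - b) • f' b = X := by rw [e2, e2']
      have hab2 : a - b = -h := by rw [ha', hb']; ring
      calc f c - (2:ℝ) • f b + f a
          = (f c - f b - (c - b) • f' b) + (f a - f b - (a - b) • f' b) := by
            rw [hcb, hab2]; module
        _ = Y + X := by rw [e1, e2'']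
        _ = X + Y := add_comm _ _
    -- Cauchy–Schwarz bounds
    have hsubab : Set.Icc a b ⊆ Set.Icc (0:ℝ) T := Set.Icc_subset_Icc ha.1 hb.2
    have hsubbc : Set.Icc b c ⊆ Set.Icc (0:ℝ) T := Set.Icc_subset_Icc hb.1 hc.2
    have hX2 : ‖X‖ ^ 2 ≤ (h ^ 3 / 3) * A m := by
      have := cs_interval hab (w := fun τ => τ - a) (g := f'')
        ((continuousOn_id.sub continuousOn_const)) (hf''.mono hsubab)
      rw [int_sq_right, hba] at this
      exact this
    have hY2 : ‖Y‖ ^ 2 ≤ (h ^ 3 / 3) * B m := by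
      have := cs_interval hbc (w := fun τ => c - τ) (g := f'')
        ((continuousOn_const.sub continuousOn_id)) (hf''.mono hsubbc)
      rw [int_sq_left, hcb] at this
      exact this
    have hXY : ‖X + Y‖ ^ 2 ≤ 2 * (‖X‖ ^ 2 + ‖Y‖ ^ 2) := by
      have h1 : ‖X + Y‖ ≤ ‖X‖ + ‖Y‖ := norm_add_le _ _
      nlinarith [norm_nonneg (X + Y), norm_nonneg X, norm_nonneg Y, sq_nonneg (‖X‖ - ‖Y‖)]
    have hnorm : ‖((h ^ 2)⁻¹ : ℝ) • (f c - (2:ℝ) • f b + f a)‖ ^ 2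
        = ((h ^ 2)⁻¹) ^ 2 * ‖X + Y‖ ^ 2 := by
      rw [hD, norm_smul, Real.norm_eq_abs, abs_of_pos (by positivity), mul_pow]
    rw [hnorm]
    have hstep : ((h ^ 2)⁻¹) ^ 2 * ‖X + Y‖ ^ 2
        ≤ ((h ^ 2)⁻¹) ^ 2 * (2 * ((h ^ 3 / 3) * A m + (h ^ 3 / 3) * B m)) := by
      apply mul_le_mul_of_nonneg_left _ (by positivity)
      calc ‖X + Y‖ ^ 2 ≤ 2 * (‖X‖ ^ 2 + ‖Y‖ ^ 2) := hXY
        _ ≤ 2 * ((h ^ 3 / 3) * A m + (h ^ 3 / 3) * B m) := by linarith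
    calc ((h ^ 2)⁻¹) ^ 2 * ‖X + Y‖ ^ 2
        ≤ ((h ^ 2)⁻¹) ^ 2 * (2 * ((h ^ 3 / 3) * A m + (h ^ 3 / 3) * B m)) := hstep
      _ = (2 / (3 * h)) * (A m + B m) := by field_simp
  -- sums telescope
  have hM1 : 1 ≤ M := by omega
  have hcastM1 : ((M - 1 : ℕ) : ℝ) = (M : ℝ) - 1 := by
    push_cast [Nat.cast_sub hM1]; ring
  have hS1 : (∑ m ∈ Finset.Icc 1 (M - 1), A m) ≤ J := by
    have tele : (∑ i ∈ Finset.range (M - 1),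
        ∫ τ in ((i:ℝ) * h)..(((i:ℝ) + 1) * h), ‖f'' τ‖ ^ 2)
        = ∫ τ in ((0:ℝ) * h)..(((M - 1 : ℕ):ℝ) * h), ‖f'' τ‖ ^ 2 := by
      have := intervalIntegral.sum_integral_adjacent_intervals
        (μ := MeasureTheory.volume) (a := fun i : ℕ => (i:ℝ) * h) (n := M - 1)
        (f := fun s => ‖f'' s‖ ^ 2) ?_
      · convert this using 2 <;> push_cast <;> ring
      · intro k hk
        have hk1 : (k:ℝ) + 1 ≤ (M:ℝ) := by
          have : k + 1 ≤ M := by omega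
          exact_mod_cast this
        exact hIntF _ _ (hmem _ (by positivity) (by linarith))
          (hmem _ (by positivity) (by push_cast; linarith))
    have reindex : (∑ m ∈ Finset.Icc 1 (M - 1), A m)
        = ∑ i ∈ Finset.range (M - 1), ∫ τ in ((i:ℝ) * h)..(((i:ℝ) + 1) * h), ‖f'' τ‖ ^ 2 := by
      rw [← Finset.Ico_add_one_right_eq_Icc, Finset.sum_Ico_eq_sum_range, Nat.add_sub_cancel]
      refine Finset.sum_congr rfl fun i _ => ?_
      have e1 : ((1 + i : ℕ) : ℝ) - 1 = (i : ℝ) := by push_cast; ring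
      have e2 : ((1 + i : ℕ) : ℝ) = (i : ℝ) + 1 := by push_cast; ring
      show (∫ τ in ((((1 + i : ℕ) : ℝ) - 1) * h)..(((1 + i : ℕ) : ℝ) * h), ‖f'' τ‖ ^ 2) = _
      rw [e1, e2]
    rw [reindex, tele]
    have : ((0:ℝ) * h) = ((0:ℝ)) := by ring
    rw [this]
    apply hJmono _ _ ⟨le_refl _, hT.le⟩
      (hmem _ (by positivity) (by rw [hcastM1]; linarith)) ?_
    positivity
  have hS2 : (∑ m ∈ Finset.Icc 1 (M - 1), B m) ≤ J := by
    have tele : (∑ i ∈ Finset.range (M - 1),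
        ∫ τ in (((i:ℝ) + 1) * h)..(((i:ℝ) + 2) * h), ‖f'' τ‖ ^ 2)
        = ∫ τ in ((0:ℝ) + 1) * h..((((M - 1 : ℕ):ℝ) + 1) * h), ‖f'' τ‖ ^ 2 := by
      have := intervalIntegral.sum_integral_adjacent_intervals
        (μ := MeasureTheory.volume) (a := fun i : ℕ => ((i:ℝ) + 1) * h) (n := M - 1)
        (f := fun s => ‖f'' s‖ ^ 2) ?_
      · convert this using 2 <;> push_cast <;> ring
      · intro k hk
        have hk2 : (k:ℝ) + 2 ≤ (M:ℝ) := by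
          have : k + 2 ≤ M := by omega
          exact_mod_cast this
        exact hIntF _ _ (hmem _ (by positivity) (by linarith))
          (hmem _ (by positivity) (by push_cast; linarith))
    have reindex : (∑ m ∈ Finset.Icc 1 (M - 1), B m)
        = ∑ i ∈ Finset.range (M - 1),
          ∫ τ in (((i:ℝ) + 1) * h)..(((i:ℝ) + 2) * h), ‖f'' τ‖ ^ 2 := by
      rw [← Finset.Ico_add_one_right_eq_Icc, Finset.sum_Ico_eq_sum_range, Nat.add_sub_cancel]
      refine Finset.sum_congr rfl fun i _ => ?_
      have e1 : ((1 + i : ℕ) : ℝ) = (i : ℝ) + 1 := by push_cast; ring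
      have e2 : ((1 + i : ℕ) : ℝ) + 1 = (i : ℝ) + 2 := by push_cast; ring
      show (∫ τ in (((1 + i : ℕ) : ℝ) * h)..((((1 + i : ℕ) : ℝ) + 1) * h), ‖f'' τ‖ ^ 2) = _
      rw [e1, show ((i:ℝ) + 1) + 1 = (i:ℝ) + 2 from by ring]
    rw [reindex, tele]
    have e : (((M - 1 : ℕ):ℝ) + 1) * h = (M:ℝ) * h := by rw [hcastM1]; ring
    rw [e, hMh]
    have hM1R : (1:ℝ) ≤ (M:ℝ) := by exact_mod_cast hM1
    apply hJmono _ _ (hmem _ (by norm_num) (by norm_num; linarith)) ⟨hT.le, le_refl _⟩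
    nlinarith [hhpos, hMh, hM1R]
  -- final arithmetic
  have hsum : (∑ m ∈ Finset.Icc 1 (M - 1),
      ‖((h ^ 2)⁻¹ : ℝ) • (f (((m:ℝ) + 1) * h) - (2:ℝ) • f ((m:ℝ) * h) + f (((m:ℝ) - 1) * h))‖ ^ 2)
      ≤ (2 / (3 * h)) * ((∑ m ∈ Finset.Icc 1 (M - 1), A m) + ∑ m ∈ Finset.Icc 1 (M - 1), B m) := by
    calc _ ≤ ∑ m ∈ Finset.Icc 1 (M - 1), (2 / (3 * h)) * (A m + B m) :=
          Finset.sum_le_sum hterm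
      _ = _ := by rw [← Finset.mul_sum, Finset.sum_add_distrib]
  calc h * ∑ m ∈ Finset.Icc 1 (M - 1),
        ‖((h ^ 2)⁻¹ : ℝ) • (f (((m:ℝ) + 1) * h) - (2:ℝ) • f ((m:ℝ) * h) + f (((m:ℝ) - 1) * h))‖ ^ 2
      ≤ h * ((2 / (3 * h)) * ((∑ m ∈ Finset.Icc 1 (M - 1), A m) + ∑ m ∈ Finset.Icc 1 (M - 1), B m)) :=
        mul_le_mul_of_nonneg_left hsum hhpos.le
    _ = (2 / 3) * ((∑ m ∈ Finset.Icc 1 (M - 1), A m) + ∑ m ∈ Finset.Icc 1 (M - 1), B m) := by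
        field_simp
    _ ≤ (2 / 3) * (J + J) := by
        apply mul_le_mul_of_nonneg_left (add_le_add hS1 hS2) (by norm_num)
    _ = (4 / 3) * J := by ring
end

section
/- Let E be a real Banach space, let t ∈ ℝ and h > 0, and let f : ℝ → E be three times continuously differentiable on [t − h, t + h]. Then (1/4) f''(t + h) + (1/2) f''(t) + (1/4) f''(t − h) − ( f(t + h) − 2 f(t) + f(t − h) ) / h² = (1/4) ∫₀^{h} (1 − 2(1 − τ/h)²) f'''(t + τ) dτ − (1/4) ∫_{−h}^{0} (1 − 2(1 + τ/h)²) f'''(t + τ) dτ. -/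
open Set intervalIntegral MeasureTheory

lemma ftc_aux {E : Type*} [NormedAddCommGroup E] [NormedSpace ℝ E] [CompleteSpace E]
    {a b : ℝ} (hab : a ≤ b) (g g' : ℝ → E)
    (hg : ∀ s ∈ Set.Icc a b, HasDerivWithinAt g (g' s) (Set.Icc a b) s)
    (hcont : ContinuousOn g' (Set.Icc a b)) :
    ∫ s in a..b, g' s = g b - g a := by
  refine intervalIntegral.integral_eq_sub_of_hasDeriv_right_of_le hab
    (fun s hs => (hg s hs).continuousWithinAt) ?_ ?_
  · intro s hs
    exact ((hg s (Set.Ioo_subset_Icc_self hs)).hasDerivAt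
      (Icc_mem_nhds hs.1 hs.2)).hasDerivWithinAt
  · exact ContinuousOn.intervalIntegrable (by rwa [Set.uIcc_of_le hab])

lemma taylor_aux {E : Type*} [NormedAddCommGroup E] [NormedSpace ℝ E] [CompleteSpace E]
    {a b : ℝ} (c : ℝ) (hab : a ≤ b) (f f' f'' f''' : ℝ → E)
    (hf : ∀ s ∈ Set.Icc a b, HasDerivWithinAt f (f' s) (Set.Icc a b) s)
    (hf' : ∀ s ∈ Set.Icc a b, HasDerivWithinAt f' (f'' s) (Set.Icc a b) s)
    (hf'' : ∀ s ∈ Set.Icc a b, HasDerivWithinAt f'' (f''' s) (Set.Icc a b) s)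
    (hcont : ContinuousOn f''' (Set.Icc a b)) :
    ∫ s in a..b, ((c - s) ^ 2 / 2) • f''' s
      = (f b + (c - b) • f' b + ((c - b) ^ 2 / 2) • f'' b)
        - (f a + (c - a) • f' a + ((c - a) ^ 2 / 2) • f'' a) := by
  exact ftc_aux hab (fun s => f s + (c - s) • f' s + ((c - s) ^ 2 / 2) • f'' s)
    (fun s => ((c - s) ^ 2 / 2) • f''' s)
    (by
      intro s hs
      have h1 : HasDerivWithinAt (fun x : ℝ => c - x) (-1) (Set.Icc a b) s :=
        (hasDerivWithinAt_id s (Set.Icc a b)).const_sub c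
      have h2 : HasDerivWithinAt (fun x : ℝ => (c - x) ^ 2 / 2) (-(c - s)) (Set.Icc a b) s := by
        have : HasDerivWithinAt (fun x : ℝ => (c - x) ^ 2 / 2) _ (Set.Icc a b) s :=
          (h1.pow 2).div_const 2
        convert this using 1
        push_cast
        ring
      have H : HasDerivWithinAt (fun s => f s + (c - s) • f' s + ((c - s) ^ 2 / 2) • f'' s) _
          (Set.Icc a b) s := ((hf s hs).add (h1.smul (hf' s hs))).add (h2.smul (hf'' s hs))
      convert H using 1
      module)
    (((((continuousOn_const.sub continuousOn_id).pow 2).div_const 2)).smul hcont)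

/-- Integral representation (via the third derivative) of the consistency error of
the implicit (1/4, 1/2, 1/4) time-stepping scheme, from Lemma 3.4 of the paper. -/
theorem stmt9 {E : Type*} [NormedAddCommGroup E] [NormedSpace ℝ E] [CompleteSpace E]
    (t h : ℝ) (hh : 0 < h)
    (f f' f'' f''' : ℝ → E)
    (hf : ∀ s ∈ Set.Icc (t - h) (t + h), HasDerivWithinAt f (f' s) (Set.Icc (t - h) (t + h)) s)
    (hf' : ∀ s ∈ Set.Icc (t - h) (t + h), HasDerivWithinAt f' (f'' s) (Set.Icc (t - h) (t + h)) s)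
    (hf'' : ∀ s ∈ Set.Icc (t - h) (t + h),
      HasDerivWithinAt f'' (f''' s) (Set.Icc (t - h) (t + h)) s)
    (hf''' : ContinuousOn f''' (Set.Icc (t - h) (t + h))) :
    (1 / 4 : ℝ) • f'' (t + h) + (1 / 2 : ℝ) • f'' t + (1 / 4 : ℝ) • f'' (t - h)
        - ((h ^ 2)⁻¹ : ℝ) • (f (t + h) - (2 : ℝ) • f t + f (t - h))
      = (1 / 4 : ℝ) • (∫ τ in (0 : ℝ)..h, (1 - 2 * (1 - τ / h) ^ 2) • f''' (t + τ))
        - (1 / 4 : ℝ) • (∫ τ in (-h)..(0 : ℝ), (1 - 2 * (1 + τ / h) ^ 2) • f''' (t + τ)) := by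
  have hne : h ≠ 0 := hh.ne'
  have h1 : t ≤ t + h := by linarith
  have h2 : t - h ≤ t := by linarith
  have hsub1 : Set.Icc t (t + h) ⊆ Set.Icc (t - h) (t + h) :=
    Set.Icc_subset_Icc (by linarith) le_rfl
  have hsub2 : Set.Icc (t - h) t ⊆ Set.Icc (t - h) (t + h) :=
    Set.Icc_subset_Icc le_rfl (by linarith)
  -- continuity of f''' on subintervals
  have hc1 : ContinuousOn f''' (Set.Icc t (t + h)) := hf'''.mono hsub1
  have hc2 : ContinuousOn f''' (Set.Icc (t - h) t) := hf'''.mono hsub2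
  -- FTC pieces
  have A1 : ∫ s in t..(t + h), f''' s = f'' (t + h) - f'' t :=
    ftc_aux h1 f'' f''' (fun s hs => (hf'' s (hsub1 hs)).mono hsub1) hc1
  have A2 : ∫ s in (t - h)..t, f''' s = f'' t - f'' (t - h) :=
    ftc_aux h2 f'' f''' (fun s hs => (hf'' s (hsub2 hs)).mono hsub2) hc2
  -- Taylor pieces
  have B1 := taylor_aux (t + h) h1 f f' f'' f'''
    (fun s hs => (hf s (hsub1 hs)).mono hsub1)
    (fun s hs => (hf' s (hsub1 hs)).mono hsub1)
    (fun s hs => (hf'' s (hsub1 hs)).mono hsub1) hc1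
  have B2 := taylor_aux (t - h) h2 f f' f'' f'''
    (fun s hs => (hf s (hsub2 hs)).mono hsub2)
    (fun s hs => (hf' s (hsub2 hs)).mono hsub2)
    (fun s hs => (hf'' s (hsub2 hs)).mono hsub2) hc2
  -- integrabilities
  have i1 : IntervalIntegrable f''' volume t (t + h) :=
    ContinuousOn.intervalIntegrable (by rwa [Set.uIcc_of_le h1])
  have i2 : IntervalIntegrable f''' volume (t - h) t :=
    ContinuousOn.intervalIntegrable (by rwa [Set.uIcc_of_le h2])
  have j1 : IntervalIntegrable (fun s => ((t + h - s) ^ 2 / 2) • f''' s) volume t (t + h) :=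
    ContinuousOn.intervalIntegrable (by
      rw [Set.uIcc_of_le h1]
      exact (((continuousOn_const.sub continuousOn_id).pow 2).div_const 2).smul hc1)
  have j2 : IntervalIntegrable (fun s => ((t - h - s) ^ 2 / 2) • f''' s) volume (t - h) t :=
    ContinuousOn.intervalIntegrable (by
      rw [Set.uIcc_of_le h2]
      exact (((continuousOn_const.sub continuousOn_id).pow 2).div_const 2).smul hc2)
  -- rewrite the RHS integrals by substitution s = t + τ
  have C1 : (∫ τ in (0 : ℝ)..h, (1 - 2 * (1 - τ / h) ^ 2) • f''' (t + τ))
      = ∫ s in t..(t + h), (1 - 2 * ((t + h - s) / h) ^ 2) • f''' s := by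
    have e : ∀ τ : ℝ, (1 - 2 * (1 - τ / h) ^ 2) • f''' (t + τ)
        = (fun s => (1 - 2 * ((t + h - s) / h) ^ 2) • f''' s) (t + τ) := by
      intro τ
      have : (1 : ℝ) - 2 * (1 - τ / h) ^ 2 = 1 - 2 * ((t + h - (t + τ)) / h) ^ 2 := by
        field_simp
        try ring
      simp only [this]
    simp only [e]
    rw [intervalIntegral.integral_comp_add_left (fun s => (1 - 2 * ((t + h - s) / h) ^ 2) • f''' s) t]
    norm_num
  have C2 : (∫ τ in (-h)..(0 : ℝ), (1 - 2 * (1 + τ / h) ^ 2) • f''' (t + τ))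
      = ∫ s in (t - h)..t, (1 - 2 * ((t - h - s) / h) ^ 2) • f''' s := by
    have e : ∀ τ : ℝ, (1 - 2 * (1 + τ / h) ^ 2) • f''' (t + τ)
        = (fun s => (1 - 2 * ((t - h - s) / h) ^ 2) • f''' s) (t + τ) := by
      intro τ
      have : (1 : ℝ) - 2 * (1 + τ / h) ^ 2 = 1 - 2 * ((t - h - (t + τ)) / h) ^ 2 := by
        field_simp
        try ring
      simp only [this]
    simp only [e]
    rw [intervalIntegral.integral_comp_add_left (fun s => (1 - 2 * ((t - h - s) / h) ^ 2) • f''' s) t]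
    have e0 : t + -h = t - h := by ring
    have e1 : t + 0 = t := by ring
    rw [e0, e1]
  -- split each integral
  have D1 : (∫ s in t..(t + h), (1 - 2 * ((t + h - s) / h) ^ 2) • f''' s)
      = (∫ s in t..(t + h), f''' s)
        - (4 / h ^ 2) • ∫ s in t..(t + h), ((t + h - s) ^ 2 / 2) • f''' s := by
    have key := intervalIntegral.integral_sub i1 (j1.smul (4 / h ^ 2))
    simp only [Pi.smul_apply] at key
    rw [intervalIntegral.integral_smul] at key
    rw [← key]
    apply intervalIntegral.integral_congr
    intro s hs
    have coef : (1 : ℝ) - 2 * ((t + h - s) / h) ^ 2 = 1 - 4 / h ^ 2 * ((t + h - s) ^ 2 / 2) := by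
      field_simp
      ring
    show (1 - 2 * ((t + h - s) / h) ^ 2) • f''' s
        = f''' s - (4 / h ^ 2) • (((t + h - s) ^ 2 / 2) • f''' s)
    rw [coef, sub_smul, one_smul, smul_smul]
  have D2 : (∫ s in (t - h)..t, (1 - 2 * ((t - h - s) / h) ^ 2) • f''' s)
      = (∫ s in (t - h)..t, f''' s)
        - (4 / h ^ 2) • ∫ s in (t - h)..t, ((t - h - s) ^ 2 / 2) • f''' s := by
    have key := intervalIntegral.integral_sub i2 (j2.smul (4 / h ^ 2))
    simp only [Pi.smul_apply] at key
    rw [intervalIntegral.integral_smul] at key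
    rw [← key]
    apply intervalIntegral.integral_congr
    intro s hs
    have coef : (1 : ℝ) - 2 * ((t - h - s) / h) ^ 2 = 1 - 4 / h ^ 2 * ((t - h - s) ^ 2 / 2) := by
      field_simp
      ring
    show (1 - 2 * ((t - h - s) / h) ^ 2) • f''' s
        = f''' s - (4 / h ^ 2) • (((t - h - s) ^ 2 / 2) • f''' s)
    rw [coef, sub_smul, one_smul, smul_smul]
  rw [C1, C2, D1, D2, A1, A2, B1, B2]
  match_scalars <;> field_simp <;> ring
end

section
/- Let E be a real Banach space, let t ∈ ℝ and h > 0, and let f : ℝ → E be four times continuously differentiable on [t − h, t + h]. Then (1/4) f''(t + h) + (1/2) f''(t) + (1/4) f''(t − h) − ( f(t + h) − 2 f(t) + f(t − h) ) / h² = (1/12) ∫_{−h}^{h} (h − |τ|) ( 3 − 2 (1 − |τ|/h)² ) f''''(t + τ) dτ. -/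
open Set intervalIntegral

lemma ftc1 {E : Type*} [NormedAddCommGroup E] [NormedSpace ℝ E] [CompleteSpace E]
    {A B a b : ℝ} (g g' g'' : ℝ → E)
    (hg : ∀ s ∈ Set.Icc A B, HasDerivWithinAt g (g' s) (Set.Icc A B) s)
    (hg' : ∀ s ∈ Set.Icc A B, HasDerivWithinAt g' (g'' s) (Set.Icc A B) s)
    (hc : ContinuousOn g'' (Set.Icc A B))
    (hab : a ≤ b) (hsub : Set.Icc a b ⊆ Set.Icc A B) (p : ℝ) :
    ∫ s in a..b, (p - s) • g'' s
      = (g b + (p - b) • g' b) - (g a + (p - a) • g' a) := by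
  have haA : a ∈ Set.Icc A B := hsub ⟨le_rfl, hab⟩
  have hbB : b ∈ Set.Icc A B := hsub ⟨hab, le_rfl⟩
  have hgc : ContinuousOn g (Set.Icc A B) := fun s hs => (hg s hs).continuousWithinAt
  have hg'c : ContinuousOn g' (Set.Icc A B) := fun s hs => (hg' s hs).continuousWithinAt
  have key : ∀ x ∈ Set.Ioo a b,
      HasDerivAt (fun s => g s + (p - s) • g' s) ((p - x) • g'' x) x := by
    intro x hx
    have hmem : Set.Icc A B ∈ nhds x :=
      Icc_mem_nhds (lt_of_le_of_lt haA.1 hx.1) (lt_of_lt_of_le hx.2 hbB.2)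
    have hxAB : x ∈ Set.Icc A B := hsub ⟨hx.1.le, hx.2.le⟩
    have d1 : HasDerivAt g (g' x) x := (hg x hxAB).hasDerivAt hmem
    have d2 : HasDerivAt g' (g'' x) x := (hg' x hxAB).hasDerivAt hmem
    have dp : HasDerivAt (fun s : ℝ => p - s) (-1) x := by
      simpa using (hasDerivAt_id x).const_sub p
    have : HasDerivAt (fun s => g s + (p - s) • g' s) _ x := d1.add (dp.smul d2)
    convert this using 1
    module
  have hFc : ContinuousOn (fun s => g s + (p - s) • g' s) (Set.Icc a b) :=
    (hgc.mono hsub).add ((continuousOn_const.sub continuousOn_id).smul (hg'c.mono hsub))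
  have hint : IntervalIntegrable (fun s => (p - s) • g'' s) MeasureTheory.volume a b := by
    apply ContinuousOn.intervalIntegrable
    rw [Set.uIcc_of_le hab]
    exact (continuousOn_const.sub continuousOn_id).smul (hc.mono hsub)
  exact integral_eq_sub_of_hasDeriv_right_of_le hab hFc
    (fun x hx => (key x hx).hasDerivWithinAt) hint

lemma ftc3 {E : Type*} [NormedAddCommGroup E] [NormedSpace ℝ E] [CompleteSpace E]
    {A B a b : ℝ} (g g' g'' g''' g'''' : ℝ → E)
    (hg : ∀ s ∈ Set.Icc A B, HasDerivWithinAt g (g' s) (Set.Icc A B) s)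
    (hg' : ∀ s ∈ Set.Icc A B, HasDerivWithinAt g' (g'' s) (Set.Icc A B) s)
    (hg'' : ∀ s ∈ Set.Icc A B, HasDerivWithinAt g'' (g''' s) (Set.Icc A B) s)
    (hg''' : ∀ s ∈ Set.Icc A B, HasDerivWithinAt g''' (g'''' s) (Set.Icc A B) s)
    (hc : ContinuousOn g'''' (Set.Icc A B))
    (hab : a ≤ b) (hsub : Set.Icc a b ⊆ Set.Icc A B) (p : ℝ) :
    ∫ s in a..b, ((p - s) ^ 3 / 6) • g'''' s
      = (g b + (p - b) • g' b + ((p - b) ^ 2 / 2) • g'' b + ((p - b) ^ 3 / 6) • g''' b)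
        - (g a + (p - a) • g' a + ((p - a) ^ 2 / 2) • g'' a + ((p - a) ^ 3 / 6) • g''' a) := by
  have haA : a ∈ Set.Icc A B := hsub ⟨le_rfl, hab⟩
  have hbB : b ∈ Set.Icc A B := hsub ⟨hab, le_rfl⟩
  have hgc : ContinuousOn g (Set.Icc A B) := fun s hs => (hg s hs).continuousWithinAt
  have hg'c : ContinuousOn g' (Set.Icc A B) := fun s hs => (hg' s hs).continuousWithinAt
  have hg''c : ContinuousOn g'' (Set.Icc A B) := fun s hs => (hg'' s hs).continuousWithinAt
  have hg'''c : ContinuousOn g''' (Set.Icc A B) := fun s hs => (hg''' s hs).continuousWithinAt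
  have key : ∀ x ∈ Set.Ioo a b,
      HasDerivAt (fun s => g s + (p - s) • g' s + ((p - s) ^ 2 / 2) • g'' s
          + ((p - s) ^ 3 / 6) • g''' s) (((p - x) ^ 3 / 6) • g'''' x) x := by
    intro x hx
    have hmem : Set.Icc A B ∈ nhds x :=
      Icc_mem_nhds (lt_of_le_of_lt haA.1 hx.1) (lt_of_lt_of_le hx.2 hbB.2)
    have hxAB : x ∈ Set.Icc A B := hsub ⟨hx.1.le, hx.2.le⟩
    have d1 : HasDerivAt g (g' x) x := (hg x hxAB).hasDerivAt hmem
    have d2 : HasDerivAt g' (g'' x) x := (hg' x hxAB).hasDerivAt hmem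
    have d3 : HasDerivAt g'' (g''' x) x := (hg'' x hxAB).hasDerivAt hmem
    have d4 : HasDerivAt g''' (g'''' x) x := (hg''' x hxAB).hasDerivAt hmem
    have dp : HasDerivAt (fun s : ℝ => p - s) (-1) x := by
      simpa using (hasDerivAt_id x).const_sub p
    have dq2 : HasDerivAt (fun s : ℝ => (p - s) ^ 2 / 2) (-(p - x)) x := by
      have : HasDerivAt (fun s : ℝ => (p - s) ^ 2 / 2) _ x := (dp.pow 2).div_const 2
      convert this using 1
      ring
    have dq3 : HasDerivAt (fun s : ℝ => (p - s) ^ 3 / 6) (-((p - x) ^ 2 / 2)) x := by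
      have : HasDerivAt (fun s : ℝ => (p - s) ^ 3 / 6) _ x := (dp.pow 3).div_const 6
      convert this using 1
      ring
    have : HasDerivAt (fun s => g s + (p - s) • g' s + ((p - s) ^ 2 / 2) • g'' s
        + ((p - s) ^ 3 / 6) • g''' s) _ x :=
      ((d1.add (dp.smul d2)).add (dq2.smul d3)).add (dq3.smul d4)
    convert this using 1
    module
  have hFc : ContinuousOn (fun s => g s + (p - s) • g' s + ((p - s) ^ 2 / 2) • g'' s
      + ((p - s) ^ 3 / 6) • g''' s) (Set.Icc a b) := by
    apply ContinuousOn.add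
    apply ContinuousOn.add
    apply ContinuousOn.add
    · exact hgc.mono hsub
    · exact (continuousOn_const.sub continuousOn_id).smul (hg'c.mono hsub)
    · exact (((continuousOn_const.sub continuousOn_id).pow 2).div_const 2).smul (hg''c.mono hsub)
    · exact (((continuousOn_const.sub continuousOn_id).pow 3).div_const 6).smul (hg'''c.mono hsub)
  have hint : IntervalIntegrable (fun s => ((p - s) ^ 3 / 6) • g'''' s) MeasureTheory.volume a b := by
    apply ContinuousOn.intervalIntegrable
    rw [Set.uIcc_of_le hab]
    exact (((continuousOn_const.sub continuousOn_id).pow 3).div_const 6).smul (hc.mono hsub)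
  exact integral_eq_sub_of_hasDeriv_right_of_le hab hFc
    (fun x hx => (key x hx).hasDerivWithinAt) hint

/-- Integral representation (via the fourth derivative) of the consistency error of
the implicit (1/4, 1/2, 1/4) time-stepping scheme, from Lemma 3.4 of the paper. -/
theorem stmt10 {E : Type*} [NormedAddCommGroup E] [NormedSpace ℝ E] [CompleteSpace E]
    (t h : ℝ) (hh : 0 < h)
    (f f' f'' f''' f'''' : ℝ → E)
    (hf : ∀ s ∈ Set.Icc (t - h) (t + h), HasDerivWithinAt f (f' s) (Set.Icc (t - h) (t + h)) s)
    (hf' : ∀ s ∈ Set.Icc (t - h) (t + h), HasDerivWithinAt f' (f'' s) (Set.Icc (t - h) (t + h)) s)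
    (hf'' : ∀ s ∈ Set.Icc (t - h) (t + h),
      HasDerivWithinAt f'' (f''' s) (Set.Icc (t - h) (t + h)) s)
    (hf''' : ∀ s ∈ Set.Icc (t - h) (t + h),
      HasDerivWithinAt f''' (f'''' s) (Set.Icc (t - h) (t + h)) s)
    (hf'''' : ContinuousOn f'''' (Set.Icc (t - h) (t + h))) :
    (1 / 4 : ℝ) • f'' (t + h) + (1 / 2 : ℝ) • f'' t + (1 / 4 : ℝ) • f'' (t - h)
        - ((h ^ 2)⁻¹ : ℝ) • (f (t + h) - (2 : ℝ) • f t + f (t - h))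
      = (1 / 12 : ℝ) •
          ∫ τ in (-h)..h, ((h - |τ|) * (3 - 2 * (1 - |τ| / h) ^ 2)) • f'''' (t + τ) := by
  have hne : h ≠ 0 := hh.ne'
  have h1 : t ≤ t + h := by linarith
  have h2 : t - h ≤ t := by linarith
  have hs1 : Set.Icc t (t + h) ⊆ Set.Icc (t - h) (t + h) :=
    Set.Icc_subset_Icc (by linarith) le_rfl
  have hs2 : Set.Icc (t - h) t ⊆ Set.Icc (t - h) (t + h) :=
    Set.Icc_subset_Icc le_rfl (by linarith)
  -- Taylor identities
  have I1p := ftc1 f'' f''' f'''' hf'' hf''' hf'''' h1 hs1 (t + h)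
  have I1m := ftc1 f'' f''' f'''' hf'' hf''' hf'''' h2 hs2 (t - h)
  have I3p := ftc3 f f' f'' f''' f'''' hf hf' hf'' hf''' hf'''' h1 hs1 (t + h)
  have I3m := ftc3 f f' f'' f''' f'''' hf hf' hf'' hf''' hf'''' h2 hs2 (t - h)
  -- the kernel as a function of the absolute time
  set G : ℝ → E := fun s => ((h - |s - t|) * (3 - 2 * (1 - |s - t| / h) ^ 2)) • f'''' s with hG
  have hKcont : Continuous fun s : ℝ => (h - |s - t|) * (3 - 2 * (1 - |s - t| / h) ^ 2) := by
    fun_prop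
  have hGc : ContinuousOn G (Set.Icc (t - h) (t + h)) :=
    hKcont.continuousOn.smul hf''''
  have hGint1 : IntervalIntegrable G MeasureTheory.volume (t - h) t := by
    apply ContinuousOn.intervalIntegrable
    rw [Set.uIcc_of_le h2]
    exact hGc.mono hs2
  have hGint2 : IntervalIntegrable G MeasureTheory.volume t (t + h) := by
    apply ContinuousOn.intervalIntegrable
    rw [Set.uIcc_of_le h1]
    exact hGc.mono hs1
  -- integrability of the individual pieces
  have int1p : IntervalIntegrable (fun s => (t + h - s) • f'''' s) MeasureTheory.volume t (t + h) := by
    apply ContinuousOn.intervalIntegrable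
    rw [Set.uIcc_of_le h1]
    exact (continuousOn_const.sub continuousOn_id).smul (hf''''.mono hs1)
  have int3p : IntervalIntegrable (fun s => ((t + h - s) ^ 3 / 6) • f'''' s)
      MeasureTheory.volume t (t + h) := by
    apply ContinuousOn.intervalIntegrable
    rw [Set.uIcc_of_le h1]
    exact (((continuousOn_const.sub continuousOn_id).pow 3).div_const 6).smul (hf''''.mono hs1)
  have int1m : IntervalIntegrable (fun s => (t - h - s) • f'''' s) MeasureTheory.volume (t - h) t := by
    apply ContinuousOn.intervalIntegrable
    rw [Set.uIcc_of_le h2]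
    exact (continuousOn_const.sub continuousOn_id).smul (hf''''.mono hs2)
  have int3m : IntervalIntegrable (fun s => ((t - h - s) ^ 3 / 6) • f'''' s)
      MeasureTheory.volume (t - h) t := by
    apply ContinuousOn.intervalIntegrable
    rw [Set.uIcc_of_le h2]
    exact (((continuousOn_const.sub continuousOn_id).pow 3).div_const 6).smul (hf''''.mono hs2)
  -- change of variables
  have step1 : (∫ τ in (-h)..h, ((h - |τ|) * (3 - 2 * (1 - |τ| / h) ^ 2)) • f'''' (t + τ))
      = ∫ s in (t - h)..(t + h), G s := by
    have : (∫ τ in (-h)..h, ((h - |τ|) * (3 - 2 * (1 - |τ| / h) ^ 2)) • f'''' (t + τ))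
        = ∫ τ in (-h)..h, G (t + τ) := by
      apply intervalIntegral.integral_congr
      intro τ _
      simp [hG]
    rw [this, intervalIntegral.integral_comp_add_left G t, show t + -h = t - h by ring]
  have step2 : (∫ s in (t - h)..(t + h), G s)
      = (∫ s in (t - h)..t, G s) + ∫ s in t..(t + h), G s :=
    (intervalIntegral.integral_add_adjacent_intervals hGint1 hGint2).symm
  -- the plus piece
  have Pplus : (∫ s in t..(t + h), G s)
      = (3 : ℝ) • (∫ s in t..(t + h), (t + h - s) • f'''' s)
        - (12 / h ^ 2 : ℝ) • ∫ s in t..(t + h), ((t + h - s) ^ 3 / 6) • f'''' s := by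
    have ia : IntervalIntegrable (fun s => (3 : ℝ) • ((t + h - s) • f'''' s))
        MeasureTheory.volume t (t + h) := by
      apply ContinuousOn.intervalIntegrable
      rw [Set.uIcc_of_le h1]
      exact continuousOn_const.smul
        ((continuousOn_const.sub continuousOn_id).smul (hf''''.mono hs1))
    have ib : IntervalIntegrable (fun s => (12 / h ^ 2 : ℝ) • (((t + h - s) ^ 3 / 6) • f'''' s))
        MeasureTheory.volume t (t + h) := by
      apply ContinuousOn.intervalIntegrable
      rw [Set.uIcc_of_le h1]
      exact continuousOn_const.smul
        ((((continuousOn_const.sub continuousOn_id).pow 3).div_const 6).smul (hf''''.mono hs1))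
    rw [← intervalIntegral.integral_smul, ← intervalIntegral.integral_smul,
      ← intervalIntegral.integral_sub ia ib]
    apply intervalIntegral.integral_congr
    intro s hs
    rw [Set.uIcc_of_le h1] at hs
    have habs : |s - t| = s - t := abs_of_nonneg (by linarith [hs.1])
    simp only [hG, habs, Pi.sub_apply, Pi.smul_apply]
    match_scalars
    field_simp
    ring
  -- the minus piece
  have Pminus : (∫ s in (t - h)..t, G s)
      = (-3 : ℝ) • (∫ s in (t - h)..t, (t - h - s) • f'''' s)
        + (12 / h ^ 2 : ℝ) • ∫ s in (t - h)..t, ((t - h - s) ^ 3 / 6) • f'''' s := by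
    have ia : IntervalIntegrable (fun s => (-3 : ℝ) • ((t - h - s) • f'''' s))
        MeasureTheory.volume (t - h) t := by
      apply ContinuousOn.intervalIntegrable
      rw [Set.uIcc_of_le h2]
      exact continuousOn_const.smul
        ((continuousOn_const.sub continuousOn_id).smul (hf''''.mono hs2))
    have ib : IntervalIntegrable (fun s => (12 / h ^ 2 : ℝ) • (((t - h - s) ^ 3 / 6) • f'''' s))
        MeasureTheory.volume (t - h) t := by
      apply ContinuousOn.intervalIntegrable
      rw [Set.uIcc_of_le h2]
      exact continuousOn_const.smul
        ((((continuousOn_const.sub continuousOn_id).pow 3).div_const 6).smul (hf''''.mono hs2))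
    rw [← intervalIntegral.integral_smul, ← intervalIntegral.integral_smul,
      ← intervalIntegral.integral_add ia ib]
    apply intervalIntegral.integral_congr
    intro s hs
    rw [Set.uIcc_of_le h2] at hs
    have habs : |s - t| = -(s - t) := abs_of_nonpos (by linarith [hs.2])
    simp only [hG, habs, Pi.add_apply, Pi.smul_apply]
    match_scalars
    field_simp
    ring
  rw [step1, step2, Pplus, Pminus, I1p, I1m, I3p, I3m]
  match_scalars <;> field_simp <;> ring
end

section
/- There exists a constant c > 0 such that for every real Hilbert space H, every T > 0, every integer M ≥ 2, with Δt = T/M and t_m = mΔt, and every four times continuously differentiable f : [0,T] → H, one has Δt · Σ_{m=1}^{M−1} ‖ s_m ‖² ≤ c Δt⁴ ∫₀^T ‖f''''(t)‖² dt, where s_m = (1/4) f''(t_{m+1}) + (1/2) f''(t_m) + (1/4) f''(t_{m−1}) − ( f(t_{m+1}) − 2 f(t_m) + f(t_{m−1}) ) / Δt². -/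
open MeasureTheory intervalIntegral Set

lemma interval_cs {a b : ℝ} (hab : a ≤ b) {g : ℝ → ℝ} (hg : ContinuousOn g (Set.Icc a b))
    (hnn : ∀ s ∈ Set.Icc a b, 0 ≤ g s) :
    (∫ s in a..b, g s) ^ 2 ≤ (b - a) * ∫ s in a..b, g s ^ 2 := by
  set μ := MeasureTheory.volume.restrict (Set.Ioc a b) with hμ
  haveI : IsFiniteMeasure μ := by
    constructor
    rw [hμ, Measure.restrict_apply_univ, Real.volume_Ioc]
    exact ENNReal.ofReal_lt_top
  have hmeas : AEStronglyMeasurable g μ :=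
    (hg.mono Set.Ioc_subset_Icc_self).aestronglyMeasurable measurableSet_Ioc
  obtain ⟨C, hC⟩ := IsCompact.exists_bound_of_continuousOn isCompact_Icc hg
  have hmem : MemLp g (ENNReal.ofReal 2) μ :=
    MemLp.of_bound hmeas C <| (ae_restrict_iff' measurableSet_Ioc).2 <|
      Filter.Eventually.of_forall fun x hx => hC x (Set.Ioc_subset_Icc_self hx)
  have hone : MemLp (fun _ : ℝ => (1:ℝ)) (ENNReal.ofReal 2) μ := memLp_const 1
  have hconj : Real.HolderConjugate 2 2 := Real.HolderConjugate.two_two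
  have h := integral_mul_le_Lp_mul_Lq_of_nonneg hconj
      (μ := μ) (f := fun _ => (1:ℝ)) (g := g)
      (Filter.Eventually.of_forall fun _ => zero_le_one)
      ((ae_restrict_iff' measurableSet_Ioc).2 <|
        Filter.Eventually.of_forall fun x hx => hnn x (Set.Ioc_subset_Icc_self hx))
      hone hmem
  simp only [one_mul] at h
  have h1 : ∫ x, (1:ℝ) ^ (2:ℝ) ∂μ = b - a := by
    simp [hμ, Real.volume_Ioc, ENNReal.toReal_ofReal (sub_nonneg.2 hab), hab]
  have h2 : ∫ x, g x ^ (2:ℝ) ∂μ = ∫ s in a..b, g s ^ 2 := by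
    rw [intervalIntegral.integral_of_le hab]
    refine integral_congr_ae ?_
    refine (ae_restrict_iff' measurableSet_Ioc).2 <| Filter.Eventually.of_forall fun x hx => ?_
    show g x ^ (2:ℝ) = g x ^ (2:ℕ)
    rw [show ((2:ℝ)) = ((2:ℕ):ℝ) by norm_num, Real.rpow_natCast]
  have h3 : ∫ x, g x ∂μ = ∫ s in a..b, g s := (intervalIntegral.integral_of_le hab).symm
  rw [h1, h2, h3] at h
  have hJ : 0 ≤ ∫ s in a..b, g s := by
    apply intervalIntegral.integral_nonneg hab hnn
  have hY : 0 ≤ ∫ s in a..b, g s ^ 2 :=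
    intervalIntegral.integral_nonneg hab fun x hx => sq_nonneg _
  have hX : (0:ℝ) ≤ b - a := sub_nonneg.2 hab
  calc (∫ s in a..b, g s) ^ 2
      ≤ ((b - a) ^ (1/(2:ℝ)) * (∫ s in a..b, g s ^ 2) ^ (1/(2:ℝ))) ^ 2 := by
        apply pow_le_pow_left₀ hJ h
    _ = (b - a) * ∫ s in a..b, g s ^ 2 := by
        rw [mul_pow, ← Real.rpow_natCast ((b-a) ^ (1/(2:ℝ))) 2,
          ← Real.rpow_natCast ((∫ s in a..b, g s ^ 2) ^ (1/(2:ℝ))) 2,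
          ← Real.rpow_mul hX, ← Real.rpow_mul hY]
        norm_num

section
variable {H : Type} [NormedAddCommGroup H] [NormedSpace ℝ H] [CompleteSpace H] {T : ℝ}

lemma ftc_within {u v : ℝ → H}
    (hu : ∀ s ∈ Set.Icc (0:ℝ) T, HasDerivWithinAt u (v s) (Set.Icc 0 T) s)
    (hv : ContinuousOn v (Set.Icc 0 T))
    {a b : ℝ} (ha : a ∈ Set.Icc (0:ℝ) T) (hb : b ∈ Set.Icc (0:ℝ) T) :
    ∫ s in a..b, v s = u b - u a := by
  have key : ∀ x y : ℝ, x ∈ Set.Icc (0:ℝ) T → y ∈ Set.Icc (0:ℝ) T → x ≤ y →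
      ∫ s in x..y, v s = u y - u x := by
    intro x y hx hy hxy
    have hsub : Set.Icc x y ⊆ Set.Icc (0:ℝ) T := Set.Icc_subset_Icc hx.1 hy.2
    apply intervalIntegral.integral_eq_sub_of_hasDeriv_right_of_le hxy
    · exact fun s hs => ((hu s (hsub hs)).continuousWithinAt).mono hsub
    · intro t ht
      have h0 : t ∈ Set.Ioo (0:ℝ) T := ⟨lt_of_le_of_lt hx.1 ht.1, lt_of_lt_of_le ht.2 hy.2⟩
      exact ((hu t (Set.Ioo_subset_Icc_self h0)).hasDerivAt
        (Icc_mem_nhds h0.1 h0.2)).hasDerivWithinAt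
    · exact (hv.mono (by rw [Set.uIcc_of_le hxy]; exact hsub)).intervalIntegrable
  rcases le_total a b with h | h
  · exact key a b ha hb h
  · rw [intervalIntegral.integral_symm, key b a hb ha h]; abel

lemma taylor_deg1 {g g' g'' : ℝ → H}
    (hg : ∀ s ∈ Set.Icc (0:ℝ) T, HasDerivWithinAt g (g' s) (Set.Icc 0 T) s)
    (hg' : ∀ s ∈ Set.Icc (0:ℝ) T, HasDerivWithinAt g' (g'' s) (Set.Icc 0 T) s)
    (hg'' : ContinuousOn g'' (Set.Icc 0 T))
    {a b : ℝ} (ha : a ∈ Set.Icc (0:ℝ) T) (hb : b ∈ Set.Icc (0:ℝ) T) :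
    g b = g a + (b - a) • g' a + ∫ s in a..b, (b - s) • g'' s := by
  have key := ftc_within (T := T) (u := fun s => g s + (b - s) • g' s)
      (v := fun s => (b - s) • g'' s) ?_ ?_ ha hb
  · rw [key]; module
  · intro s hs
    have h1 : HasDerivWithinAt (fun y : ℝ => b - y) (-1) (Set.Icc 0 T) s := by
      simpa using (hasDerivWithinAt_id s (Set.Icc (0:ℝ) T)).const_sub b
    have := (hg s hs).add ((h1.smul (hg' s hs)))
    convert this using 1
    · rfl
    module
  · exact (continuousOn_const.sub continuousOn_id).smul hg''

lemma taylor_deg3 {g g' g'' g''' g'''' : ℝ → H}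
    (hg : ∀ s ∈ Set.Icc (0:ℝ) T, HasDerivWithinAt g (g' s) (Set.Icc 0 T) s)
    (hg' : ∀ s ∈ Set.Icc (0:ℝ) T, HasDerivWithinAt g' (g'' s) (Set.Icc 0 T) s)
    (hg'' : ∀ s ∈ Set.Icc (0:ℝ) T, HasDerivWithinAt g'' (g''' s) (Set.Icc 0 T) s)
    (hg''' : ∀ s ∈ Set.Icc (0:ℝ) T, HasDerivWithinAt g''' (g'''' s) (Set.Icc 0 T) s)
    (hg'''' : ContinuousOn g'''' (Set.Icc 0 T))
    {a b : ℝ} (ha : a ∈ Set.Icc (0:ℝ) T) (hb : b ∈ Set.Icc (0:ℝ) T) :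
    g b = g a + (b - a) • g' a + ((b - a) ^ 2 / 2) • g'' a + ((b - a) ^ 3 / 6) • g''' a
      + ∫ s in a..b, ((b - s) ^ 3 / 6) • g'''' s := by
  have key := ftc_within (T := T)
      (u := fun s => g s + (b - s) • g' s + ((b - s) ^ 2 / 2) • g'' s
        + ((b - s) ^ 3 / 6) • g''' s)
      (v := fun s => ((b - s) ^ 3 / 6) • g'''' s) ?_ ?_ ha hb
  · rw [key]; module
  · intro s hs
    have h1 : HasDerivWithinAt (fun y : ℝ => b - y) (-1) (Set.Icc 0 T) s := by
      simpa using (hasDerivWithinAt_id s (Set.Icc (0:ℝ) T)).const_sub b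
    have h2 : HasDerivWithinAt (fun y : ℝ => (b - y) ^ 2 / 2) (-(b - s)) (Set.Icc 0 T) s := by
      have h := (h1.pow 2).div_const 2
      refine h.congr_deriv ?_
      push_cast
      ring
    have h3 : HasDerivWithinAt (fun y : ℝ => (b - y) ^ 3 / 6) (-((b - s) ^ 2 / 2))
        (Set.Icc 0 T) s := by
      have h := (h1.pow 3).div_const 6
      refine h.congr_deriv ?_
      push_cast
      ring
    have := ((hg s hs).add (h1.smul (hg' s hs))).add
        ((h2.smul (hg'' s hs)).add (h3.smul (hg''' s hs)))
    convert this using 1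
    · ext y; simp only [Pi.add_apply, Pi.smul_apply']; module
    · module
  · exact (Continuous.continuousOn (by continuity)).smul hg''''

lemma step_bound {f f' f'' f''' f'''' : ℝ → H}
    (hf : ∀ s ∈ Set.Icc (0:ℝ) T, HasDerivWithinAt f (f' s) (Set.Icc 0 T) s)
    (hf' : ∀ s ∈ Set.Icc (0:ℝ) T, HasDerivWithinAt f' (f'' s) (Set.Icc 0 T) s)
    (hf'' : ∀ s ∈ Set.Icc (0:ℝ) T, HasDerivWithinAt f'' (f''' s) (Set.Icc 0 T) s)
    (hf''' : ∀ s ∈ Set.Icc (0:ℝ) T, HasDerivWithinAt f''' (f'''' s) (Set.Icc 0 T) s)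
    (hcont : ContinuousOn f'''' (Set.Icc 0 T))
    {Δ tm : ℝ} (hΔ : 0 < Δ) (h0 : 0 ≤ tm - Δ) (hT' : tm + Δ ≤ T) :
    ‖(1/4 : ℝ) • f'' (tm + Δ) + (1/2 : ℝ) • f'' tm + (1/4 : ℝ) • f'' (tm - Δ)
        - ((Δ ^ 2)⁻¹ : ℝ) • (f (tm + Δ) - (2:ℝ) • f tm + f (tm - Δ))‖ ^ 2
      ≤ 2 * Δ ^ 3 * ∫ s in (tm - Δ)..(tm + Δ), ‖f'''' s‖ ^ 2 := by
  have hΔne : Δ ≠ 0 := ne_of_gt hΔ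
  have hmem0 : tm - Δ ∈ Set.Icc (0:ℝ) T := ⟨h0, by linarith⟩
  have hmemm : tm ∈ Set.Icc (0:ℝ) T := ⟨by linarith, by linarith⟩
  have hmemp : tm + Δ ∈ Set.Icc (0:ℝ) T := ⟨by linarith, hT'⟩
  set I1p := ∫ s in tm..(tm + Δ), ((tm + Δ) - s) • f'''' s with hI1pdef
  set I1m := ∫ s in tm..(tm - Δ), ((tm - Δ) - s) • f'''' s with hI1mdef
  set I3p := ∫ s in tm..(tm + Δ), (((tm + Δ) - s) ^ 3 / 6) • f'''' s with hI3pdef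
  set I3m := ∫ s in tm..(tm - Δ), (((tm - Δ) - s) ^ 3 / 6) • f'''' s with hI3mdef
  have hrep : (1/4 : ℝ) • f'' (tm + Δ) + (1/2 : ℝ) • f'' tm + (1/4 : ℝ) • f'' (tm - Δ)
      - ((Δ ^ 2)⁻¹ : ℝ) • (f (tm + Δ) - (2:ℝ) • f tm + f (tm - Δ))
      = (1/4 : ℝ) • I1p + (1/4 : ℝ) • I1m - ((Δ ^ 2)⁻¹ : ℝ) • I3p
        - ((Δ ^ 2)⁻¹ : ℝ) • I3m := by
    rw [taylor_deg1 hf'' hf''' hcont hmemm hmemp, taylor_deg1 hf'' hf''' hcont hmemm hmem0,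
      taylor_deg3 hf hf' hf'' hf''' hcont hmemm hmemp,
      taylor_deg3 hf hf' hf'' hf''' hcont hmemm hmem0]
    rw [← hI1pdef, ← hI1mdef, ← hI3pdef, ← hI3mdef]
    match_scalars <;> field_simp <;> ring
  -- continuity / integrability helpers
  have hsub1 : Set.uIcc tm (tm + Δ) ⊆ Set.Icc (0:ℝ) T := by
    rw [Set.uIcc_of_le (by linarith)]; exact Set.Icc_subset_Icc hmemm.1 hmemp.2
  have hsub2 : Set.uIcc (tm - Δ) tm ⊆ Set.Icc (0:ℝ) T := by
    rw [Set.uIcc_of_le (by linarith)]; exact Set.Icc_subset_Icc hmem0.1 hmemm.2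
  have hcn : ContinuousOn (fun s => ‖f'''' s‖) (Set.Icc (0:ℝ) T) := hcont.norm
  have hip : IntervalIntegrable (fun s => ‖f'''' s‖) volume tm (tm + Δ) :=
    (hcn.mono hsub1).intervalIntegrable
  have him : IntervalIntegrable (fun s => ‖f'''' s‖) volume (tm - Δ) tm :=
    (hcn.mono hsub2).intervalIntegrable
  set Jp := ∫ s in tm..(tm + Δ), ‖f'''' s‖ with hJpdef
  set Jm := ∫ s in (tm - Δ)..tm, ‖f'''' s‖ with hJmdef
  have hJpnn : 0 ≤ Jp := intervalIntegral.integral_nonneg (by linarith) fun x _ => norm_nonneg _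
  have hJmnn : 0 ≤ Jm := intervalIntegral.integral_nonneg (by linarith) fun x _ => norm_nonneg _
  have key : ∀ (a b : ℝ), a ∈ Set.Icc (0:ℝ) T → b ∈ Set.Icc (0:ℝ) T → a ≤ b →
      ∀ (c : ℝ → ℝ) (K : ℝ), Continuous c → (∀ x ∈ Set.Icc a b, |c x| ≤ K) →
      ‖∫ s in a..b, c s • f'''' s‖ ≤ K * ∫ s in a..b, ‖f'''' s‖ := by
    intro a b ha hb hab c K hc hK
    have hsub : Set.uIcc a b ⊆ Set.Icc (0:ℝ) T := by
      rw [Set.uIcc_of_le hab]; exact Set.Icc_subset_Icc ha.1 hb.2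
    have hint1 : IntervalIntegrable (fun s => ‖c s • f'''' s‖) volume a b :=
      ((hc.continuousOn.smul (hcont.mono hsub)).norm).intervalIntegrable
    have hint2 : IntervalIntegrable (fun s => K * ‖f'''' s‖) volume a b :=
      (continuousOn_const.mul ((hcn.mono hsub))).intervalIntegrable
    calc ‖∫ s in a..b, c s • f'''' s‖
        ≤ ∫ s in a..b, ‖c s • f'''' s‖ :=
          intervalIntegral.norm_integral_le_integral_norm hab
      _ ≤ ∫ s in a..b, K * ‖f'''' s‖ := by
          apply intervalIntegral.integral_mono_on hab hint1 hint2
          intro x hx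
          rw [norm_smul, Real.norm_eq_abs]
          exact mul_le_mul_of_nonneg_right (hK x hx) (norm_nonneg _)
      _ = K * ∫ s in a..b, ‖f'''' s‖ := intervalIntegral.integral_const_mul _ _
  have habs1 : ∀ (b : ℝ) (x : ℝ), |b - x| ≤ Δ → |(b - x) ^ 3 / 6| ≤ Δ ^ 3 / 6 := by
    intro b x h
    calc |(b - x) ^ 3 / 6| = |b - x| ^ 3 / 6 := by
          rw [abs_div, abs_pow]; norm_num
      _ ≤ Δ ^ 3 / 6 := by gcongr
  have hI1p : ‖I1p‖ ≤ Δ * Jp := by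
    refine key tm (tm + Δ) hmemm hmemp (by linarith) (fun s => (tm + Δ) - s) Δ
      (by fun_prop) ?_
    intro x hx
    have : |(tm + Δ) - x| ≤ Δ := abs_le.2 ⟨by linarith [hx.2], by linarith [hx.1]⟩
    simpa using this
  have hI3p : ‖I3p‖ ≤ (Δ ^ 3 / 6) * Jp := by
    refine key tm (tm + Δ) hmemm hmemp (by linarith) (fun s => ((tm + Δ) - s) ^ 3 / 6)
      (Δ ^ 3 / 6) (by fun_prop) ?_
    intro x hx
    simpa using habs1 (tm + Δ) x (abs_le.2 ⟨by linarith [hx.2], by linarith [hx.1]⟩)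
  have hI1msymm : ‖I1m‖ = ‖∫ s in (tm - Δ)..tm, ((tm - Δ) - s) • f'''' s‖ := by
    rw [hI1mdef, intervalIntegral.integral_symm, norm_neg]
  have hI3msymm : ‖I3m‖ = ‖∫ s in (tm - Δ)..tm, (((tm - Δ) - s) ^ 3 / 6) • f'''' s‖ := by
    rw [hI3mdef, intervalIntegral.integral_symm, norm_neg]
  have hI1m : ‖I1m‖ ≤ Δ * Jm := by
    rw [hI1msymm]
    refine key (tm - Δ) tm hmem0 hmemm (by linarith) (fun s => (tm - Δ) - s) Δ
      (by fun_prop) ?_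
    intro x hx
    have : |(tm - Δ) - x| ≤ Δ := abs_le.2 ⟨by linarith [hx.2], by linarith [hx.1]⟩
    simpa using this
  have hI3m : ‖I3m‖ ≤ (Δ ^ 3 / 6) * Jm := by
    rw [hI3msymm]
    refine key (tm - Δ) tm hmem0 hmemm (by linarith) (fun s => ((tm - Δ) - s) ^ 3 / 6)
      (Δ ^ 3 / 6) (by fun_prop) ?_
    intro x hx
    simpa using habs1 (tm - Δ) x (abs_le.2 ⟨by linarith [hx.2], by linarith [hx.1]⟩)
  -- assemble the norm bound
  have hnorm : ‖(1/4 : ℝ) • f'' (tm + Δ) + (1/2 : ℝ) • f'' tm + (1/4 : ℝ) • f'' (tm - Δ)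
      - ((Δ ^ 2)⁻¹ : ℝ) • (f (tm + Δ) - (2:ℝ) • f tm + f (tm - Δ))‖ ≤ Δ * (Jp + Jm) := by
    rw [hrep]
    have h4 : ((Δ ^ 2)⁻¹ : ℝ) * (Δ ^ 3 / 6) = Δ / 6 := by field_simp
    calc ‖(1/4 : ℝ) • I1p + (1/4 : ℝ) • I1m - ((Δ ^ 2)⁻¹ : ℝ) • I3p - ((Δ ^ 2)⁻¹ : ℝ) • I3m‖
        ≤ ‖(1/4 : ℝ) • I1p + (1/4 : ℝ) • I1m - ((Δ ^ 2)⁻¹ : ℝ) • I3p‖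
            + ‖((Δ ^ 2)⁻¹ : ℝ) • I3m‖ := norm_sub_le _ _
      _ ≤ (‖(1/4 : ℝ) • I1p + (1/4 : ℝ) • I1m‖ + ‖((Δ ^ 2)⁻¹ : ℝ) • I3p‖)
            + ‖((Δ ^ 2)⁻¹ : ℝ) • I3m‖ := by gcongr; exact norm_sub_le _ _
      _ ≤ ((‖(1/4 : ℝ) • I1p‖ + ‖(1/4 : ℝ) • I1m‖) + ‖((Δ ^ 2)⁻¹ : ℝ) • I3p‖)
            + ‖((Δ ^ 2)⁻¹ : ℝ) • I3m‖ := by gcongr; exact norm_add_le _ _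
      _ = (1/4) * ‖I1p‖ + (1/4) * ‖I1m‖ + (Δ ^ 2)⁻¹ * ‖I3p‖ + (Δ ^ 2)⁻¹ * ‖I3m‖ := by
          simp only [norm_smul, Real.norm_eq_abs,
            abs_of_nonneg (by norm_num : (0:ℝ) ≤ 1/4),
            abs_of_nonneg (by positivity : (0:ℝ) ≤ (Δ ^ 2)⁻¹)]
      _ ≤ (1/4) * (Δ * Jp) + (1/4) * (Δ * Jm) + (Δ ^ 2)⁻¹ * ((Δ ^ 3 / 6) * Jp)
            + (Δ ^ 2)⁻¹ * ((Δ ^ 3 / 6) * Jm) := by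
          gcongr <;> positivity
      _ = (5 * Δ / 12) * (Jp + Jm) := by field_simp; ring
      _ ≤ Δ * (Jp + Jm) := by nlinarith [add_nonneg hJpnn hJmnn]
  -- combine with Cauchy-Schwarz
  have hJadd : Jm + Jp = ∫ s in (tm - Δ)..(tm + Δ), ‖f'''' s‖ :=
    intervalIntegral.integral_add_adjacent_intervals him hip
  have hcs : (Jm + Jp) ^ 2 ≤ (2 * Δ) * ∫ s in (tm - Δ)..(tm + Δ), ‖f'''' s‖ ^ 2 := by
    rw [hJadd]
    have := interval_cs (a := tm - Δ) (b := tm + Δ) (by linarith)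
      (g := fun s => ‖f'''' s‖)
      (hcn.mono (Set.Icc_subset_Icc hmem0.1 hmemp.2)) (fun s _ => norm_nonneg _)
    calc (∫ s in (tm - Δ)..(tm + Δ), ‖f'''' s‖) ^ 2
        ≤ ((tm + Δ) - (tm - Δ)) * ∫ s in (tm - Δ)..(tm + Δ), ‖f'''' s‖ ^ 2 := this
      _ = (2 * Δ) * ∫ s in (tm - Δ)..(tm + Δ), ‖f'''' s‖ ^ 2 := by ring_nf
  calc ‖(1/4 : ℝ) • f'' (tm + Δ) + (1/2 : ℝ) • f'' tm + (1/4 : ℝ) • f'' (tm - Δ)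
      - ((Δ ^ 2)⁻¹ : ℝ) • (f (tm + Δ) - (2:ℝ) • f tm + f (tm - Δ))‖ ^ 2
      ≤ (Δ * (Jp + Jm)) ^ 2 := by
        apply pow_le_pow_left₀ (norm_nonneg _) hnorm
    _ = Δ ^ 2 * (Jm + Jp) ^ 2 := by ring
    _ ≤ Δ ^ 2 * ((2 * Δ) * ∫ s in (tm - Δ)..(tm + Δ), ‖f'''' s‖ ^ 2) := by
        apply mul_le_mul_of_nonneg_left hcs (by positivity)
    _ = 2 * Δ ^ 3 * ∫ s in (tm - Δ)..(tm + Δ), ‖f'''' s‖ ^ 2 := by ring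
end


/-- Aggregated second-order consistency estimate of Lemma 3.4 of the paper: there is
a universal constant `c > 0` such that for every real Hilbert space, every time step
`Δt = T/M` and every `C⁴` function `f : [0,T] → H`,
`Δt Σ_{m=1}^{M−1} ‖s_m‖² ≤ c Δt⁴ ∫₀^T ‖f''''‖²`, where `s_m` is the consistency
error of the (1/4, 1/2, 1/4) scheme. -/
theorem stmt12 :
    ∃ c : ℝ, 0 < c ∧
      ∀ (H : Type) [inst₁ : NormedAddCommGroup H] [inst₂ : InnerProductSpace ℝ H]
        [inst₃ : CompleteSpace H],
        ∀ (T : ℝ), 0 < T → ∀ (M : ℕ), 2 ≤ M →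
        ∀ (f f' f'' f''' f'''' : ℝ → H),
          (∀ s ∈ Set.Icc (0 : ℝ) T, HasDerivWithinAt f (f' s) (Set.Icc 0 T) s) →
          (∀ s ∈ Set.Icc (0 : ℝ) T, HasDerivWithinAt f' (f'' s) (Set.Icc 0 T) s) →
          (∀ s ∈ Set.Icc (0 : ℝ) T, HasDerivWithinAt f'' (f''' s) (Set.Icc 0 T) s) →
          (∀ s ∈ Set.Icc (0 : ℝ) T, HasDerivWithinAt f''' (f'''' s) (Set.Icc 0 T) s) →
          ContinuousOn f'''' (Set.Icc 0 T) →
          (T / M) * ∑ m ∈ Finset.Icc 1 (M - 1),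
              ‖(1 / 4 : ℝ) • f'' (((m : ℝ) + 1) * (T / M))
                  + (1 / 2 : ℝ) • f'' ((m : ℝ) * (T / M))
                  + (1 / 4 : ℝ) • f'' (((m : ℝ) - 1) * (T / M))
                  - (((T / M) ^ 2)⁻¹ : ℝ) •
                      (f (((m : ℝ) + 1) * (T / M)) - (2 : ℝ) • f ((m : ℝ) * (T / M))
                        + f (((m : ℝ) - 1) * (T / M)))‖ ^ 2
            ≤ c * (T / M) ^ 4 * ∫ s in (0 : ℝ)..T, ‖f'''' s‖ ^ 2 := by
  refine ⟨4, by norm_num, ?_⟩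
  intro H _ _ _ T hT M hM f f' f'' f''' f'''' hf hf' hf'' hf''' hcont
  set Δ := T / (M:ℝ) with hΔdef
  have hMpos : (0:ℝ) < M := by
    have : (2:ℝ) ≤ M := by exact_mod_cast hM
    linarith
  have hΔ : 0 < Δ := div_pos hT hMpos
  have hMT : (M:ℝ) * Δ = T := by
    rw [hΔdef]; field_simp
  set G : ℝ → ℝ := fun s => ‖f'''' s‖ ^ 2 with hGdef
  have hGc : ContinuousOn G (Set.Icc 0 T) := (hcont.norm).pow 2
  have hGnn : ∀ x, 0 ≤ G x := fun x => sq_nonneg _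
  set a : ℕ → ℝ := fun k => (k:ℝ) * Δ with hadef
  have hamem : ∀ k : ℕ, k ≤ M → a k ∈ Set.Icc (0:ℝ) T := by
    intro k hk
    constructor
    · positivity
    · rw [← hMT, hadef]
      have h : (k:ℝ) ≤ M := by exact_mod_cast hk
      show (k:ℝ) * Δ ≤ (M:ℝ) * Δ
      nlinarith
  have hint : ∀ x y, x ∈ Set.Icc (0:ℝ) T → y ∈ Set.Icc (0:ℝ) T →
      IntervalIntegrable G volume x y := by
    intro x y hx hy
    apply (hGc.mono ?_).intervalIntegrable
    intro z hz
    rcases le_total x y with h | h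
    · rw [Set.uIcc_of_le h] at hz; exact ⟨le_trans hx.1 hz.1, le_trans hz.2 hy.2⟩
    · rw [Set.uIcc_of_ge h] at hz; exact ⟨le_trans hy.1 hz.1, le_trans hz.2 hx.2⟩
  -- per-term bound
  have hterm : ∀ m ∈ Finset.Icc 1 (M-1),
      ‖(1 / 4 : ℝ) • f'' (((m : ℝ) + 1) * Δ) + (1 / 2 : ℝ) • f'' ((m : ℝ) * Δ)
          + (1 / 4 : ℝ) • f'' (((m : ℝ) - 1) * Δ)
          - ((Δ ^ 2)⁻¹ : ℝ) • (f (((m : ℝ) + 1) * Δ) - (2 : ℝ) • f ((m : ℝ) * Δ)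
              + f (((m : ℝ) - 1) * Δ))‖ ^ 2
        ≤ 2 * Δ ^ 3 * ∫ s in (a (m-1))..(a (m+1)), G s := by
    intro m hm
    obtain ⟨hm1, hm2⟩ := Finset.mem_Icc.mp hm
    have hm1' : (1:ℝ) ≤ m := by exact_mod_cast hm1
    have hm2' : (m:ℝ) + 1 ≤ M := by
      have h : m + 1 ≤ M := by omega
      exact_mod_cast h
    have e1 : ((m:ℝ) + 1) * Δ = (m:ℝ) * Δ + Δ := by ring
    have e2 : ((m:ℝ) - 1) * Δ = (m:ℝ) * Δ - Δ := by ring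
    have ea : a (m-1) = (m:ℝ) * Δ - Δ := by
      rw [hadef]; push_cast [Nat.cast_sub hm1]; ring
    have eb : a (m+1) = (m:ℝ) * Δ + Δ := by
      rw [hadef]; push_cast; ring
    rw [e1, e2, ea, eb]
    apply step_bound hf hf' hf'' hf''' hcont hΔ
    · nlinarith
    · nlinarith
  -- sum of the local integrals is at most twice the global one
  have hsplit : ∀ m ∈ Finset.Icc 1 (M-1),
      ∫ s in (a (m-1))..(a (m+1)), G s
        = (∫ s in (a (m-1))..(a m), G s) + ∫ s in (a m)..(a (m+1)), G s := by
    intro m hm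
    obtain ⟨hm1, hm2⟩ := Finset.mem_Icc.mp hm
    exact (intervalIntegral.integral_add_adjacent_intervals
      (hint _ _ (hamem _ (by omega)) (hamem _ (by omega)))
      (hint _ _ (hamem _ (by omega)) (hamem _ (by omega)))).symm
  have hIcc : Finset.Icc 1 (M-1) = Finset.Ico 1 M := by
    rw [← Finset.Ico_add_one_right_eq_Icc]
    congr 1
    omega
  have hsum1 : ∑ m ∈ Finset.Icc 1 (M-1), ∫ s in (a (m-1))..(a m), G s
      ≤ ∫ s in (0:ℝ)..T, G s := by
    rw [hIcc, Finset.sum_Ico_eq_sum_range]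
    have heq : ∀ i ∈ Finset.range (M-1),
        (∫ s in (a (1 + i - 1))..(a (1 + i)), G s) = ∫ s in (a i)..(a (i+1)), G s := by
      intro i _
      have e1 : 1 + i - 1 = i := by omega
      have e2 : 1 + i = i + 1 := by omega
      rw [e1, e2]
    rw [Finset.sum_congr rfl heq,
      intervalIntegral.sum_integral_adjacent_intervals
        (fun k hk => hint _ _ (hamem _ (by omega)) (hamem _ (by omega)))]
    have ha0 : a 0 = 0 := by simp [hadef]
    apply intervalIntegral.integral_mono_interval (le_of_eq ha0.symm)
      (by rw [ha0]; exact (hamem (M-1) (by omega)).1) (hamem (M-1) (by omega)).2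
      (Filter.Eventually.of_forall fun x => hGnn x)
      (hint 0 T ⟨le_refl 0, hT.le⟩ ⟨hT.le, le_refl T⟩)
  have hsum2 : ∑ m ∈ Finset.Icc 1 (M-1), ∫ s in (a m)..(a (m+1)), G s
      ≤ ∫ s in (0:ℝ)..T, G s := by
    have hadj := intervalIntegral.sum_integral_adjacent_intervals_Ico (a := a)
      (m := 1) (n := M) (f := G) (μ := MeasureTheory.volume) (show 1 ≤ M by omega)
      (fun (k : ℕ) (hk : k ∈ Set.Ico 1 M) => by
        have h2 : k < M := hk.2
        exact hint _ _ (hamem _ h2.le) (hamem _ h2))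
    rw [hIcc, hadj]
    have h1M : a 1 ≤ a M := by
      have h : (1:ℝ) ≤ (M:ℝ) := by
        have : (2:ℝ) ≤ M := by exact_mod_cast hM
        linarith
      simp only [hadef]
      push_cast
      nlinarith
    exact intervalIntegral.integral_mono_interval (hamem 1 (by omega)).1
      h1M (hamem M (le_refl M)).2
      (Filter.Eventually.of_forall fun x => hGnn x)
      (hint 0 T ⟨le_refl 0, hT.le⟩ ⟨hT.le, le_refl T⟩)
  have hsum : ∑ m ∈ Finset.Icc 1 (M-1), ∫ s in (a (m-1))..(a (m+1)), G s
      ≤ 2 * ∫ s in (0:ℝ)..T, G s := by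
    rw [Finset.sum_congr rfl hsplit, Finset.sum_add_distrib]
    linarith
  calc Δ * ∑ m ∈ Finset.Icc 1 (M-1),
      ‖(1 / 4 : ℝ) • f'' (((m : ℝ) + 1) * Δ) + (1 / 2 : ℝ) • f'' ((m : ℝ) * Δ)
          + (1 / 4 : ℝ) • f'' (((m : ℝ) - 1) * Δ)
          - ((Δ ^ 2)⁻¹ : ℝ) • (f (((m : ℝ) + 1) * Δ) - (2 : ℝ) • f ((m : ℝ) * Δ)
              + f (((m : ℝ) - 1) * Δ))‖ ^ 2
      ≤ Δ * ∑ m ∈ Finset.Icc 1 (M-1), (2 * Δ ^ 3 * ∫ s in (a (m-1))..(a (m+1)), G s) :=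
        mul_le_mul_of_nonneg_left (Finset.sum_le_sum hterm) hΔ.le
    _ = (2 * Δ ^ 4) * ∑ m ∈ Finset.Icc 1 (M-1), ∫ s in (a (m-1))..(a (m+1)), G s := by
        rw [← Finset.mul_sum]; ring
    _ ≤ (2 * Δ ^ 4) * (2 * ∫ s in (0:ℝ)..T, G s) :=
        mul_le_mul_of_nonneg_left hsum (by positivity)
    _ = 4 * Δ ^ 4 * ∫ s in (0:ℝ)..T, ‖f'''' s‖ ^ 2 := by rw [hGdef]; ring
end

section
/- Let X be a finite-dimensional real vector space and let A, B : X × X → ℝ be symmetric positive semidefinite bilinear forms. Let T > 0, let M ≥ 2 be an integer, Δt = T/M, and let p_0, p_1, …, p_M ∈ X and r_1, …, r_{M−1} ∈ X satisfy, for every m = 1, …, M−1 and every v ∈ X, B( (p_{m+1} − 2 p_m + p_{m−1})/Δt², v ) + A( (p_{m+1} + 2 p_m + p_{m−1})/4, v ) = B(r_m, v). Write ∂p_{m+1/2} = (p_{m+1} − p_m)/Δt and p_{m+1/2} = (p_{m+1} + p_m)/2. Then for every j = 0, 1, …, M−1: B(∂p_{j+1/2}, ∂p_{j+1/2}) + A(p_{j+1/2},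 p_{j+1/2}) ≤ 2 ( B(∂p_{1/2}, ∂p_{1/2}) + A(p_{1/2}, p_{1/2}) ) + 4 T · Δt · Σ_{m=1}^{M−1} B(r_m, r_m). -/
lemma bil_cs {X : Type*} [AddCommGroup X] [Module ℝ X]
    (B : X →ₗ[ℝ] X →ₗ[ℝ] ℝ) (hs : ∀ u v : X, B u v = B v u)
    (hp : ∀ v : X, 0 ≤ B v v) (u v : X) :
    B u v ≤ Real.sqrt (B u u) * Real.sqrt (B v v) := by
  have key : (B u v) ^ 2 ≤ B u u * B v v := by
    have h : ∀ t : ℝ, 0 ≤ B v v * (t * t) + (2 * B u v) * t + B u u := by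
      intro t
      have h0 := hp (u + t • v)
      simp only [map_add, map_smul, LinearMap.add_apply, LinearMap.smul_apply,
        smul_eq_mul] at h0
      rw [hs v u] at h0
      nlinarith [h0, sq_nonneg t]
    have hd := discrim_le_zero h
    rw [discrim] at hd
    nlinarith
  calc B u v ≤ |B u v| := le_abs_self _
    _ = Real.sqrt ((B u v) ^ 2) := (Real.sqrt_sq_eq_abs _).symm
    _ ≤ Real.sqrt (B u u * B v v) := Real.sqrt_le_sqrt key
    _ = _ := Real.sqrt_mul (hp u) _

lemma step_lem {X : Type*} [AddCommGroup X] [Module ℝ X]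
    (A B : X →ₗ[ℝ] X →ₗ[ℝ] ℝ)
    (hAsymm : ∀ u v : X, A u v = A v u) (hBsymm : ∀ u v : X, B u v = B v u)
    (dt : ℝ) (hdt : dt ≠ 0) (a b c rr : X)
    (H : ∀ v : X, B (((dt ^ 2)⁻¹ : ℝ) • (a - (2 : ℝ) • b + c)) v
        + A ((1 / 4 : ℝ) • (a + (2 : ℝ) • b + c)) v = B rr v) :
    B ((dt⁻¹ : ℝ) • (a - b)) ((dt⁻¹ : ℝ) • (a - b))
      + A ((1 / 2 : ℝ) • (a + b)) ((1 / 2 : ℝ) • (a + b))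
    = B ((dt⁻¹ : ℝ) • (b - c)) ((dt⁻¹ : ℝ) • (b - c))
      + A ((1 / 2 : ℝ) • (b + c)) ((1 / 2 : ℝ) • (b + c)) + B rr (a - c) := by
  have h := H (a - c)
  simp only [map_add, map_sub, map_smul, LinearMap.add_apply, LinearMap.sub_apply,
    LinearMap.smul_apply, smul_eq_mul] at h ⊢
  simp only [hBsymm b a, hBsymm c a, hBsymm c b, hAsymm b a, hAsymm c a, hAsymm c b] at h ⊢
  field_simp at h ⊢
  linear_combination h

/-- Discrete energy estimate at the core of Lemma 3.4 of the paper for the fully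
discrete two-level implicit scheme with weights (1/4, 1/2, 1/4): `A` is the
stiffness form and `B` the mass form, both symmetric positive semidefinite, on a
finite dimensional space. -/
theorem stmt13 {X : Type*} [AddCommGroup X] [Module ℝ X] [FiniteDimensional ℝ X]
    (A B : X →ₗ[ℝ] X →ₗ[ℝ] ℝ)
    (hAsymm : ∀ u v : X, A u v = A v u) (hBsymm : ∀ u v : X, B u v = B v u)
    (hApos : ∀ v : X, 0 ≤ A v v) (hBpos : ∀ v : X, 0 ≤ B v v)
    (T : ℝ) (hT : 0 < T) (M : ℕ) (hM : 2 ≤ M)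
    (p : ℕ → X) (r : ℕ → X)
    (heq : ∀ m ∈ Finset.Icc 1 (M - 1), ∀ v : X,
      B ((((T / M) ^ 2)⁻¹ : ℝ) • (p (m + 1) - (2 : ℝ) • p m + p (m - 1))) v
        + A ((1 / 4 : ℝ) • (p (m + 1) + (2 : ℝ) • p m + p (m - 1))) v = B (r m) v) :
    ∀ j ∈ Finset.range M,
      B (((T / M)⁻¹ : ℝ) • (p (j + 1) - p j)) (((T / M)⁻¹ : ℝ) • (p (j + 1) - p j))
          + A ((1 / 2 : ℝ) • (p (j + 1) + p j)) ((1 / 2 : ℝ) • (p (j + 1) + p j))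
        ≤ 2 * (B (((T / M)⁻¹ : ℝ) • (p 1 - p 0)) (((T / M)⁻¹ : ℝ) • (p 1 - p 0))
                + A ((1 / 2 : ℝ) • (p 1 + p 0)) ((1 / 2 : ℝ) • (p 1 + p 0)))
          + 4 * T * (T / M) * ∑ m ∈ Finset.Icc 1 (M - 1), B (r m) (r m) := by
  have hMpos : (0:ℝ) < (M:ℝ) := by positivity
  set dt : ℝ := T / M with hdtdef
  have hdtpos : 0 < dt := by positivity
  have hdt : dt ≠ 0 := ne_of_gt hdtpos
  set E : ℕ → ℝ := fun j =>
    B ((dt⁻¹ : ℝ) • (p (j + 1) - p j)) ((dt⁻¹ : ℝ) • (p (j + 1) - p j))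
      + A ((1 / 2 : ℝ) • (p (j + 1) + p j)) ((1 / 2 : ℝ) • (p (j + 1) + p j)) with hEdef
  have hEnonneg : ∀ j, 0 ≤ E j := fun j => add_nonneg (hBpos _) (hApos _)
  -- telescoping identity
  have key : ∀ j, j ≤ M - 1 →
      E j = E 0 + ∑ m ∈ Finset.Icc 1 j, B (r m) (p (m + 1) - p (m - 1)) := by
    intro j
    induction j with
    | zero => intro _; simp
    | succ k ih =>
      intro hk
      have hk' : k ≤ M - 1 := by omega
      have hmem : k + 1 ∈ Finset.Icc 1 (M - 1) := by
        simp only [Finset.mem_Icc]; omega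
      have H := heq (k + 1) hmem
      simp only [Nat.add_sub_cancel] at H
      have hstep := step_lem A B hAsymm hBsymm dt hdt
        (p (k + 1 + 1)) (p (k + 1)) (p k) (r (k + 1)) H
      have hE : E (k + 1) = E k + B (r (k + 1)) (p (k + 1 + 1) - p k) := hstep
      rw [hE, ih hk', Finset.sum_Icc_succ_top (by omega : 1 ≤ k + 1)]
      simp only [Nat.add_sub_cancel]
      ring
  -- the maximum of the energy
  obtain ⟨j₀, hj₀, hmax⟩ := Finset.exists_max_image (Finset.range M) E
    ⟨0, Finset.mem_range.2 (by omega)⟩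
  set S : ℝ := E j₀ with hSdef
  have hS0 : 0 ≤ S := hEnonneg j₀
  have hj₀le : j₀ ≤ M - 1 := by
    have := Finset.mem_range.1 hj₀; omega
  -- bound each source term
  have hterm : ∀ m ∈ Finset.Icc 1 j₀,
      B (r m) (p (m + 1) - p (m - 1))
        ≤ (2 * dt * Real.sqrt S) * Real.sqrt (B (r m) (r m)) := by
    intro m hm
    rw [Finset.mem_Icc] at hm
    have hm1 : m - 1 + 1 = m := by omega
    have hsum : B (r m) (p (m + 1) - p (m - 1))
        = B (r m) (p (m + 1) - p m) + B (r m) (p m - p (m - 1)) := by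
      rw [← map_add]; congr 1; abel
    have e1 : dt * B (r m) ((dt⁻¹ : ℝ) • (p (m + 1) - p m)) = B (r m) (p (m + 1) - p m) := by
      rw [map_smul, smul_eq_mul]; field_simp
    have e2 : dt * B (r m) ((dt⁻¹ : ℝ) • (p m - p (m - 1))) = B (r m) (p m - p (m - 1)) := by
      rw [map_smul, smul_eq_mul]; field_simp
    have hEm : B ((dt⁻¹ : ℝ) • (p (m + 1) - p m)) ((dt⁻¹ : ℝ) • (p (m + 1) - p m)) ≤ S := by
      have h := hmax m (Finset.mem_range.2 (by omega))
      have h' : E m = B ((dt⁻¹ : ℝ) • (p (m + 1) - p m)) ((dt⁻¹ : ℝ) • (p (m + 1) - p m))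
          + A ((1 / 2 : ℝ) • (p (m + 1) + p m)) ((1 / 2 : ℝ) • (p (m + 1) + p m)) := rfl
      have hz := hApos ((1 / 2 : ℝ) • (p (m + 1) + p m))
      rw [h'] at h
      linarith [h, hz]
    have hEm1 : B ((dt⁻¹ : ℝ) • (p m - p (m - 1))) ((dt⁻¹ : ℝ) • (p m - p (m - 1))) ≤ S := by
      have h := hmax (m - 1) (Finset.mem_range.2 (by omega))
      have h' : E (m - 1) = B ((dt⁻¹ : ℝ) • (p (m - 1 + 1) - p (m - 1)))
            ((dt⁻¹ : ℝ) • (p (m - 1 + 1) - p (m - 1)))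
          + A ((1 / 2 : ℝ) • (p (m - 1 + 1) + p (m - 1)))
            ((1 / 2 : ℝ) • (p (m - 1 + 1) + p (m - 1))) := rfl
      rw [hm1] at h'
      have hz := hApos ((1 / 2 : ℝ) • (p m + p (m - 1)))
      rw [h'] at h
      linarith [h, hz]
    have h1 := bil_cs B hBsymm hBpos (r m) ((dt⁻¹ : ℝ) • (p (m + 1) - p m))
    have h2 := bil_cs B hBsymm hBpos (r m) ((dt⁻¹ : ℝ) • (p m - p (m - 1)))
    have hs1 : Real.sqrt (B ((dt⁻¹ : ℝ) • (p (m + 1) - p m)) ((dt⁻¹ : ℝ) • (p (m + 1) - p m)))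
        ≤ Real.sqrt S := Real.sqrt_le_sqrt hEm
    have hs2 : Real.sqrt (B ((dt⁻¹ : ℝ) • (p m - p (m - 1))) ((dt⁻¹ : ℝ) • (p m - p (m - 1))))
        ≤ Real.sqrt S := Real.sqrt_le_sqrt hEm1
    have hrs : 0 ≤ Real.sqrt (B (r m) (r m)) := Real.sqrt_nonneg _
    have c1 : Real.sqrt (B (r m) (r m))
        * Real.sqrt (B ((dt⁻¹ : ℝ) • (p (m + 1) - p m)) ((dt⁻¹ : ℝ) • (p (m + 1) - p m)))
        ≤ Real.sqrt (B (r m) (r m)) * Real.sqrt S := mul_le_mul_of_nonneg_left hs1 hrs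
    have c2 : Real.sqrt (B (r m) (r m))
        * Real.sqrt (B ((dt⁻¹ : ℝ) • (p m - p (m - 1))) ((dt⁻¹ : ℝ) • (p m - p (m - 1))))
        ≤ Real.sqrt (B (r m) (r m)) * Real.sqrt S := mul_le_mul_of_nonneg_left hs2 hrs
    have d1 : B (r m) ((dt⁻¹ : ℝ) • (p (m + 1) - p m))
        ≤ Real.sqrt (B (r m) (r m)) * Real.sqrt S := le_trans h1 c1
    have d2 : B (r m) ((dt⁻¹ : ℝ) • (p m - p (m - 1)))
        ≤ Real.sqrt (B (r m) (r m)) * Real.sqrt S := le_trans h2 c2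
    have d1' := mul_le_mul_of_nonneg_left d1 (le_of_lt hdtpos)
    have d2' := mul_le_mul_of_nonneg_left d2 (le_of_lt hdtpos)
    rw [e1] at d1'
    rw [e2] at d2'
    rw [hsum]
    nlinarith [d1', d2']
  set Q : ℝ := ∑ m ∈ Finset.Icc 1 (M - 1), Real.sqrt (B (r m) (r m)) with hQdef
  set SB : ℝ := ∑ m ∈ Finset.Icc 1 (M - 1), B (r m) (r m) with hSBdef
  have hSB : 0 ≤ SB := Finset.sum_nonneg fun m _ => hBpos _
  have hQ0 : 0 ≤ Q := Finset.sum_nonneg fun m _ => Real.sqrt_nonneg _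
  -- main bound on S
  have hSle : S ≤ E 0 + (2 * dt * Real.sqrt S) * Q := by
    have h1 : S = E 0 + ∑ m ∈ Finset.Icc 1 j₀, B (r m) (p (m + 1) - p (m - 1)) :=
      key j₀ hj₀le
    have h2 : ∑ m ∈ Finset.Icc 1 j₀, B (r m) (p (m + 1) - p (m - 1))
        ≤ ∑ m ∈ Finset.Icc 1 j₀, (2 * dt * Real.sqrt S) * Real.sqrt (B (r m) (r m)) :=
      Finset.sum_le_sum hterm
    have h3 : ∑ m ∈ Finset.Icc 1 j₀, (2 * dt * Real.sqrt S) * Real.sqrt (B (r m) (r m))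
        ≤ ∑ m ∈ Finset.Icc 1 (M - 1), (2 * dt * Real.sqrt S) * Real.sqrt (B (r m) (r m)) := by
      refine Finset.sum_le_sum_of_subset_of_nonneg ?_ ?_
      · exact Finset.Icc_subset_Icc_right hj₀le
      · intro m _ _
        positivity
    have h4 : ∑ m ∈ Finset.Icc 1 (M - 1), (2 * dt * Real.sqrt S) * Real.sqrt (B (r m) (r m))
        = (2 * dt * Real.sqrt S) * Q := (Finset.mul_sum _ _ _).symm
    linarith [h1, h2, h3, h4.le, h4.ge]
  -- Cauchy-Schwarz on the sum
  have hQ2 : Q ^ 2 ≤ (M : ℝ) * SB := by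
    have h := sq_sum_le_card_mul_sum_sq
      (s := Finset.Icc 1 (M - 1)) (f := fun m => Real.sqrt (B (r m) (r m)))
    have hcard : ((Finset.Icc 1 (M - 1)).card : ℝ) ≤ (M : ℝ) := by
      rw [Nat.card_Icc]
      have : M - 1 + 1 - 1 ≤ M := by omega
      exact_mod_cast this
    have hsq : ∑ m ∈ Finset.Icc 1 (M - 1), (Real.sqrt (B (r m) (r m))) ^ 2 = SB := by
      refine Finset.sum_congr rfl fun m _ => ?_
      exact Real.sq_sqrt (hBpos _)
    rw [hsq] at h
    calc Q ^ 2 ≤ ((Finset.Icc 1 (M - 1)).card : ℝ) * SB := h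
      _ ≤ (M : ℝ) * SB := mul_le_mul_of_nonneg_right hcard hSB
  have hdtM : dt * (M : ℝ) = T := by
    have hMne : (M : ℝ) ≠ 0 := ne_of_gt hMpos
    rw [hdtdef]
    field_simp
  -- final absorption
  have hfin : S ≤ 2 * E 0 + 4 * T * dt * SB := by
    have hsq : Real.sqrt S ^ 2 = S := Real.sq_sqrt hS0
    have h4 : dt ^ 2 * Q ^ 2 ≤ dt ^ 2 * ((M : ℝ) * SB) :=
      mul_le_mul_of_nonneg_left hQ2 (sq_nonneg dt)
    have h5 : dt ^ 2 * ((M : ℝ) * SB) = T * dt * SB := by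
      rw [← hdtM]; ring
    nlinarith [sq_nonneg (Real.sqrt S - 2 * dt * Q), hSle, h4, h5, hsq]
  intro j hj
  calc E j ≤ S := hmax j hj
    _ ≤ 2 * E 0 + 4 * T * dt * SB := hfin
end

section
/- Let d ≥ 1, ε > 0. For x ∈ ℝ^d write ⌊x⌋ ∈ ℤ^d for the componentwise integer part and {x} = x − ⌊x⌋ ∈ [0,1)^d. Let Φ : ℝ^d × ℝ^d → ℝ be measurable with ∫_{ℝ^d} ∫_{[0,1)^d} |Φ(x,y)| dy dx < ∞. Define U^ε(Φ)(x) = ∫_{[0,1)^d} Φ( ε⌊x/ε⌋ + ε t, {x/ε} ) dt. Then U^ε(Φ) is integrable on ℝ^d and ∫_{ℝ^d} U^ε(Φ)(x) dx = ∫_{ℝ^d} ∫_{[0,1)^d} Φ(x,y) dy dx. -/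
open MeasureTheory Set

namespace Stmt14Aux

variable {d : ℕ}

/-- The unit cube `[0,1)^d`. -/
def Ycube (d : ℕ) : Set (Fin d → ℝ) := Set.univ.pi fun _ : Fin d => Set.Ico (0:ℝ) 1

lemma measY : MeasurableSet (Ycube d) := MeasurableSet.univ_pi fun _ => measurableSet_Ico

/-- The restricted Lebesgue measure on the unit cube. -/
noncomputable def ν (d : ℕ) : Measure (Fin d → ℝ) := volume.restrict (Ycube d)

instance : SFinite (ν d) := by unfold ν; infer_instance

/-- `(n, s) ↦ n + s`. -/
def emap (p : (Fin d → ℤ) × (Fin d → ℝ)) : Fin d → ℝ := fun i => (p.1 i : ℝ) + p.2 i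

lemma measurable_emap : Measurable (emap (d := d)) :=
  measurable_pi_lambda _ fun i =>
    (Measurable.of_discrete.comp ((measurable_pi_apply i).comp measurable_fst)).add
      ((measurable_pi_apply i).comp measurable_snd)

/-- The integer cubes. -/
def C (n : Fin d → ℤ) : Set (Fin d → ℝ) :=
  (fun x : Fin d → ℝ => x - fun i => (n i : ℝ)) ⁻¹' Ycube d

lemma measC (n : Fin d → ℤ) : MeasurableSet (C n) :=
  (measurable_id.sub measurable_const) measY

lemma mem_C {x : Fin d → ℝ} {n : Fin d → ℤ} : x ∈ C n ↔ ∀ i, ⌊x i⌋ = n i := by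
  simp only [C, Set.mem_preimage, Ycube, Set.mem_pi, Set.mem_univ, forall_true_left,
    Set.mem_Ico, Pi.sub_apply]
  refine forall_congr' fun i => ?_
  rw [Int.floor_eq_iff]
  constructor <;> rintro ⟨h1, h2⟩ <;> constructor <;> push_cast at * <;> linarith

lemma iUnion_C : (⋃ n : Fin d → ℤ, C n) = Set.univ := by
  ext x
  simp only [Set.mem_iUnion, Set.mem_univ, iff_true]
  exact ⟨fun i => ⌊x i⌋, mem_C.2 fun i => rfl⟩

lemma disjoint_C : Pairwise (Function.onFun Disjoint (C (d := d))) := by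
  intro m n hmn
  refine Set.disjoint_left.2 ?_
  intro x hxm hxn
  exact hmn (funext fun i => (mem_C.1 hxm i).symm.trans (mem_C.1 hxn i))

lemma volume_eq_sum : (volume : Measure (Fin d → ℝ)) = Measure.sum fun n => volume.restrict (C n) := by
  rw [← Measure.restrict_iUnion disjoint_C measC, iUnion_C, Measure.restrict_univ]

lemma map_emap : Measure.map emap ((Measure.count : Measure (Fin d → ℤ)).prod (ν d)) = volume := by
  have hpiece : ∀ n : Fin d → ℤ,
      Measure.map (emap (d := d)) ((Measure.dirac n).prod (ν d)) = volume.restrict (C n) := by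
    intro n
    rw [Measure.dirac_prod, Measure.map_map measurable_emap measurable_prodMk_left]
    have he : (emap (d := d)) ∘ Prod.mk n = fun s : Fin d → ℝ => (fun i => (n i : ℝ)) + s := rfl
    rw [he]
    have hadd : Measurable fun s : Fin d → ℝ => (fun i => (n i : ℝ)) + s :=
      measurable_const.add measurable_id
    have hrm := Measure.restrict_map (μ := volume)
      (f := fun s : Fin d → ℝ => (fun i => (n i : ℝ)) + s) hadd (measC n)
    rw [(measurePreserving_add_left volume (fun i => (n i : ℝ))).map_eq] at hrm
    have hpre : (fun s : Fin d → ℝ => (fun i => (n i : ℝ)) + s) ⁻¹' C n = Ycube d := by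
      ext s; simp [C, Set.mem_preimage, add_sub_cancel_left]
    rw [hpre] at hrm
    exact hrm.symm
  have : (Measure.count : Measure (Fin d → ℤ)) = Measure.sum Measure.dirac := rfl
  rw [this, Measure.prod_sum_left, Measure.map_sum measurable_emap.aemeasurable]
  simp_rw [hpiece]
  exact volume_eq_sum.symm

end Stmt14Aux

namespace Stmt14Aux

open MeasureTheory Set

variable {d : ℕ}

/-- The folding map at scale 1. -/
noncomputable def Tmap (p : (Fin d → ℝ) × (Fin d → ℝ)) : (Fin d → ℝ) × (Fin d → ℝ) :=
  (fun i => (⌊p.1 i⌋ : ℝ) + p.2 i, fun i => Int.fract (p.1 i))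

lemma measurable_Tmap : Measurable (Tmap (d := d)) := by
  refine Measurable.prodMk ?_ ?_
  · exact measurable_pi_lambda _ fun i =>
      (Measurable.of_discrete.comp
        (Int.measurable_floor.comp ((measurable_pi_apply i).comp measurable_fst))).add
        ((measurable_pi_apply i).comp measurable_snd)
  · exact measurable_pi_lambda _ fun i =>
      measurable_fract.comp ((measurable_pi_apply i).comp measurable_fst)

instance : SFinite (Measure.count : Measure (Fin d → ℤ)) := by
  show SFinite (Measure.sum Measure.dirac); infer_instance

/-- swap the two "fractional" coordinates -/
def σmap (q : ((Fin d → ℤ) × (Fin d → ℝ)) × (Fin d → ℝ)) :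
    ((Fin d → ℤ) × (Fin d → ℝ)) × (Fin d → ℝ) := ((q.1.1, q.2), q.1.2)

lemma mp_σmap : MeasurePreserving (σmap (d := d))
    (((Measure.count : Measure (Fin d → ℤ)).prod (ν d)).prod (ν d))
    (((Measure.count : Measure (Fin d → ℤ)).prod (ν d)).prod (ν d)) := by
  have A := measurePreserving_prodAssoc (Measure.count : Measure (Fin d → ℤ)) (ν d) (ν d)
  have B := (MeasurePreserving.id (Measure.count : Measure (Fin d → ℤ))).prod
    (Measure.measurePreserving_swap (μ := ν d) (ν := ν d))
  have Cm := A.symm MeasurableEquiv.prodAssoc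
  have := Cm.comp (B.comp A)
  convert this using 1
  funext q; rfl

lemma map_Tmap : Measure.map (Tmap (d := d)) (volume.prod (ν d)) = volume.prod (ν d) := by
  set κ := (((Measure.count : Measure (Fin d → ℤ)).prod (ν d)).prod (ν d)) with hκ
  have hE : MeasurePreserving (Prod.map (emap (d := d)) id) κ (volume.prod (ν d)) :=
    (⟨measurable_emap, map_emap⟩ :
      MeasurePreserving emap ((Measure.count : Measure (Fin d → ℤ)).prod (ν d)) volume).prod
      (MeasurePreserving.id (ν d))
  have h0 : κ {q : ((Fin d → ℤ) × (Fin d → ℝ)) × (Fin d → ℝ) | q.1.2 ∉ Ycube d} = 0 := by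
    have : {q : ((Fin d → ℤ) × (Fin d → ℝ)) × (Fin d → ℝ) | q.1.2 ∉ Ycube d}
        = ((Set.univ ×ˢ (Ycube d)ᶜ) ×ˢ Set.univ) := by
      ext q; simp [Set.mem_prod]
    rw [this, hκ, Measure.prod_prod, Measure.prod_prod]
    have hν : ν d (Ycube d)ᶜ = 0 := by
      rw [ν, Measure.restrict_apply measY.compl, Set.compl_inter_self, measure_empty]
    rw [hν, mul_zero, zero_mul]
  have hae : (Tmap (d := d)) ∘ (Prod.map (emap (d := d)) id)
      =ᵐ[κ] (Prod.map (emap (d := d)) id) ∘ σmap := by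
    rw [Filter.eventuallyEq_iff_exists_mem]
    refine ⟨{q | q.1.2 ∈ Ycube d}, ?_, ?_⟩
    · rw [mem_ae_iff, Set.compl_setOf]; simpa using h0
    · rintro ⟨⟨n, s⟩, t⟩ hs
      have hs' : ∀ i, s i ∈ Set.Ico (0:ℝ) 1 := fun i => hs i (Set.mem_univ i)
      refine Prod.ext ?_ ?_
      · funext i
        show (⌊(emap (n, s)) i⌋ : ℝ) + t i = (emap (n, t)) i
        have h1 : ⌊(n i : ℝ) + s i⌋ = n i := by
          rw [Int.floor_intCast_add, Int.floor_eq_zero_iff.2 (hs' i), add_zero]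
        simp only [emap, h1]
      · funext i
        show Int.fract ((emap (n, s)) i) = s i
        rw [show (emap (n, s)) i = (n i : ℝ) + s i from rfl, Int.fract_intCast_add,
          Int.fract_eq_self.2 ⟨(hs' i).1, (hs' i).2⟩]
  calc Measure.map Tmap (volume.prod (ν d))
      = Measure.map Tmap (Measure.map (Prod.map emap id) κ) := by rw [hE.map_eq]
    _ = Measure.map (Tmap ∘ Prod.map emap id) κ :=
        Measure.map_map measurable_Tmap hE.measurable
    _ = Measure.map ((Prod.map emap id) ∘ σmap) κ := Measure.map_congr hae
    _ = Measure.map (Prod.map emap id) (Measure.map σmap κ) :=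
        (Measure.map_map hE.measurable mp_σmap.measurable).symm
    _ = Measure.map (Prod.map emap id) κ := by rw [mp_σmap.map_eq]
    _ = volume.prod (ν d) := hE.map_eq

end Stmt14Aux

namespace Stmt14Aux

open MeasureTheory Set Module ENNReal

variable {d : ℕ} {ε : ℝ}

lemma smul_prod' {A B : Type*} [MeasurableSpace A] [MeasurableSpace B]
    (c : ℝ≥0∞) (μ : Measure A) (ν' : Measure B) [SFinite ν'] :
    (c • μ).prod ν' = c • (μ.prod ν') := by
  ext s hs
  rw [Measure.prod_apply hs, Measure.smul_apply, Measure.prod_apply hs,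
    lintegral_smul_measure, smul_eq_mul]

/-- The folding map at scale ε. -/
noncomputable def Smap (ε : ℝ) (p : (Fin d → ℝ) × (Fin d → ℝ)) : (Fin d → ℝ) × (Fin d → ℝ) :=
  (fun i => ε * (⌊p.1 i / ε⌋ : ℝ) + ε * p.2 i, fun i => Int.fract (p.1 i / ε))

lemma Smap_eq (hε : ε ≠ 0) : Smap (d := d) ε =
    (Prod.map (fun x : Fin d → ℝ => ε • x) id) ∘ Tmap ∘
      (Prod.map (fun x : Fin d → ℝ => ε⁻¹ • x) id) := by
  funext p
  refine Prod.ext ?_ ?_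
  · funext i
    show ε * (⌊p.1 i / ε⌋ : ℝ) + ε * p.2 i = ε * ((⌊(ε⁻¹ • p.1) i⌋ : ℝ) + p.2 i)
    rw [mul_add]
    congr 3
    rw [Pi.smul_apply, smul_eq_mul, ← div_eq_inv_mul]
  · funext i
    show Int.fract (p.1 i / ε) = Int.fract ((ε⁻¹ • p.1) i)
    rw [Pi.smul_apply, smul_eq_mul, div_eq_inv_mul]

lemma finrank_fun : finrank ℝ (Fin d → ℝ) = d := by
  rw [finrank_fintype_fun_eq_card, Fintype.card_fin]

lemma mp_Smap (hε : 0 < ε) :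
    MeasurePreserving (Smap (d := d) ε) (volume.prod (ν d)) (volume.prod (ν d)) := by
  have hεne : ε ≠ 0 := hε.ne'
  have hm1 : Measurable (fun x : Fin d → ℝ => ε⁻¹ • x) := measurable_const_smul _
  have hm2 : Measurable (fun x : Fin d → ℝ => ε • x) := measurable_const_smul _
  have h1 : Measure.map (fun x : Fin d → ℝ => ε⁻¹ • x) volume
      = ENNReal.ofReal (ε ^ d) • volume := by
    rw [Measure.map_addHaar_smul volume (inv_ne_zero hεne)]
    congr 2
    rw [finrank_fun, inv_pow, inv_inv, abs_of_pos (pow_pos hε d)]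
  have h2 : Measure.map (fun x : Fin d → ℝ => ε • x) volume
      = ENNReal.ofReal ((ε ^ d)⁻¹) • volume := by
    rw [Measure.map_addHaar_smul volume hεne]
    congr 2
    rw [finrank_fun, abs_of_pos (inv_pos.2 (pow_pos hε d))]
  have hmS : Measurable (Smap (d := d) ε) := by
    rw [Smap_eq hεne]
    exact (hm2.prodMap measurable_id).comp
      (measurable_Tmap.comp (hm1.prodMap measurable_id))
  refine ⟨hmS, ?_⟩
  rw [Smap_eq hεne]
  rw [← Measure.map_map (hm2.prodMap measurable_id)
    (measurable_Tmap.comp (hm1.prodMap measurable_id)),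
    ← Measure.map_map measurable_Tmap (hm1.prodMap measurable_id)]
  rw [← Measure.map_prod_map _ _ hm1 measurable_id, Measure.map_id, h1, smul_prod',
    Measure.map_smul, map_Tmap, Measure.map_smul,
    ← Measure.map_prod_map _ _ hm2 measurable_id, Measure.map_id, h2, smul_prod',
    smul_smul, ← ENNReal.ofReal_mul (le_of_lt (pow_pos hε d)),
    mul_inv_cancel₀ (pow_ne_zero d hεne), ENNReal.ofReal_one, one_smul]

end Stmt14Aux



open MeasureTheory in
/-- The integral identity (6.1) of the paper for the two-scale folding (unfolding)
operator `U^ε(Φ)(x) = ∫_{[0,1)^d} Φ(ε⌊x/ε⌋ + εt, {x/ε}) dt`: for an integrable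
`Φ : ℝ^d × [0,1)^d → ℝ`, `U^ε(Φ)` is integrable and
`∫_{ℝ^d} U^ε(Φ) = ∫_{ℝ^d} ∫_{[0,1)^d} Φ`. -/
theorem stmt14 (d : ℕ) (hd : 1 ≤ d) (ε : ℝ) (hε : 0 < ε)
    (Φ : (Fin d → ℝ) → (Fin d → ℝ) → ℝ)
    (hmeas : Measurable (Function.uncurry Φ))
    (hint : Integrable (Function.uncurry Φ)
      (volume.prod (volume.restrict (Set.univ.pi fun _ : Fin d => Set.Ico (0 : ℝ) 1)))) :
    Integrable (fun x : Fin d → ℝ =>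
        ∫ t in Set.univ.pi fun _ : Fin d => Set.Ico (0 : ℝ) 1,
          Φ (fun i => ε * (⌊x i / ε⌋ : ℝ) + ε * t i) (fun i => Int.fract (x i / ε))) volume ∧
    (∫ x : Fin d → ℝ,
        ∫ t in Set.univ.pi fun _ : Fin d => Set.Ico (0 : ℝ) 1,
          Φ (fun i => ε * (⌊x i / ε⌋ : ℝ) + ε * t i) (fun i => Int.fract (x i / ε)))
      = ∫ x : Fin d → ℝ, ∫ y in Set.univ.pi fun _ : Fin d => Set.Ico (0 : ℝ) 1, Φ x y := by
  have hS := Stmt14Aux.mp_Smap (d := d) (ε := ε) hε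
  have hint' : Integrable (Function.uncurry Φ) (volume.prod (Stmt14Aux.ν d)) := hint
  have hcomp : Integrable (Function.uncurry Φ ∘ Stmt14Aux.Smap ε)
      (volume.prod (Stmt14Aux.ν d)) :=
    (hS.integrable_comp hmeas.aestronglyMeasurable).2 hint'
  constructor
  · exact hcomp.integral_prod_left
  · have e1 : (∫ x : Fin d → ℝ,
        ∫ t in Set.univ.pi fun _ : Fin d => Set.Ico (0 : ℝ) 1,
          Φ (fun i => ε * (⌊x i / ε⌋ : ℝ) + ε * t i) (fun i => Int.fract (x i / ε)))
        = ∫ z, (Function.uncurry Φ ∘ Stmt14Aux.Smap ε) z ∂(volume.prod (Stmt14Aux.ν d)) :=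
      integral_integral hcomp
    have e2 : ∫ z, (Function.uncurry Φ ∘ Stmt14Aux.Smap ε) z ∂(volume.prod (Stmt14Aux.ν d))
        = ∫ z, Function.uncurry Φ z ∂(volume.prod (Stmt14Aux.ν d)) := by
      conv_rhs => rw [← hS.map_eq]
      exact (integral_map hS.measurable.aemeasurable
        (by rw [hS.map_eq]; exact hmeas.aestronglyMeasurable)).symm
    have e3 : ∫ z, Function.uncurry Φ z ∂(volume.prod (Stmt14Aux.ν d))
        = ∫ x : Fin d → ℝ, ∫ y in Set.univ.pi fun _ : Fin d => Set.Ico (0 : ℝ) 1, Φ x y :=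
      (integral_integral hint').symm
    exact (e1.trans e2).trans e3
end
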